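/- arXiv:2312.15735 — 7 statements merged into one kernel-verified Lean document; each statement's English description precedes it below -/
import Mathlib

section
/- Let p > 2 with 2 < p ≤ 3. Then there exists a constant C > 0, depending only on p and n, such that for all vectors x, y ∈ ℝⁿ: | |x+y|^{p-2} (x+y)·y − |x|^{p-2} (x+y)·y − (p−2)|x|^{p-4} (x·y)² | ≤ C|y|^p. -/
open Real NNReal

lemma my_add_rpow_le {a b α : ℝ} (ha : 0 ≤ a) (hb : 0 ≤ b) (h0 : 0 ≤ α) (h1 : α ≤ 1) :
    (a + b) ^ α ≤ a ^ α + b ^ α := by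
  have h := NNReal.rpow_add_le_add_rpow a.toNNReal b.toNNReal h0 h1
  have h2 : ((a.toNNReal + b.toNNReal : ℝ≥0) : ℝ) ^ α ≤ ((a.toNNReal ^ α + b.toNNReal ^ α : ℝ≥0) : ℝ) := by
    rw [← NNReal.coe_rpow]
    exact_mod_cast h
  simpa [Real.coe_toNNReal a ha, Real.coe_toNNReal b hb, NNReal.coe_rpow] using h2

lemma my_holder {α s t : ℝ} (hα0 : 0 < α) (hα1 : α ≤ 1) (hs : 0 ≤ s) (ht : 0 ≤ t) :
    |t ^ α - s ^ α| ≤ |t - s| ^ α := by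
  have key : ∀ a b : ℝ, 0 ≤ a → a ≤ b → b ^ α - a ^ α ≤ (b - a) ^ α := by
    intro a b ha hab
    have h := my_add_rpow_le ha (by linarith : (0:ℝ) ≤ b - a) hα0.le hα1
    rw [add_sub_cancel] at h
    linarith
  rcases le_total s t with h | h
  · rw [abs_of_nonneg (by linarith : (0:ℝ) ≤ t - s),
      abs_of_nonneg (sub_nonneg.mpr (Real.rpow_le_rpow hs h hα0.le))]
    exact key s t hs h
  · rw [abs_of_nonpos (by linarith : t - s ≤ 0),
      abs_of_nonpos (sub_nonpos.mpr (Real.rpow_le_rpow ht h hα0.le)), neg_sub, neg_sub]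
    exact key t s ht h

lemma my_bern2 {h α : ℝ} (hh : |h| ≤ 1/2) (hα0 : 0 < α) (hα1 : α ≤ 1) :
    |(1 + h) ^ α - 1 - α * h| ≤ 2 * h ^ 2 := by
  obtain ⟨hh1, hh2⟩ := abs_le.mp hh
  have hr : (0:ℝ) < 1 + h := by linarith
  have hup : (1 + h) ^ α ≤ 1 + α * h :=
    rpow_one_add_le_one_add_mul_self (by linarith) hα0.le hα1
  have hlow : 1 + α * h - 2 * h ^ 2 ≤ (1 + h) ^ α := by
    rcases le_or_gt (1 + α * h - 2 * h ^ 2) 0 with hc | hc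
    · exact hc.trans (Real.rpow_nonneg hr.le α)
    · have hγ0 : (0:ℝ) ≤ 1 - α := by linarith
      have hbg : (1 + h) ^ (1 - α) ≤ 1 + (1 - α) * h :=
        rpow_one_add_le_one_add_mul_self (by linarith) hγ0 (by linarith)
      have hgpos : (0:ℝ) < (1 + h) ^ (1 - α) := Real.rpow_pos_of_pos hr _
      have hmul : (1 + h) ^ α * (1 + h) ^ (1 - α) = 1 + h := by
        rw [← Real.rpow_add hr]
        simp
      have hag : α * (1 - α) ≤ 1 - α := mul_le_of_le_one_left hγ0 hα1
      have step2 : (1 + α * h - 2 * h ^ 2) * (1 + (1 - α) * h) ≤ 1 + h := by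
        have key : (0:ℝ) ≤ h ^ 2 * (1 + 2 * h) :=
          mul_nonneg (sq_nonneg h) (by linarith)
        have key2 : (0:ℝ) ≤ (1 - α) * (h ^ 2 * (1 + 2 * h)) := mul_nonneg hγ0 key
        have key3 : (0:ℝ) ≤ (2 - α * (1 - α) - (1 - α)) * h ^ 2 :=
          mul_nonneg (by linarith) (sq_nonneg h)
        have e : 1 + h - (1 + α * h - 2 * h ^ 2) * (1 + (1 - α) * h)
            = (1 - α) * (h ^ 2 * (1 + 2 * h)) + (2 - α * (1 - α) - (1 - α)) * h ^ 2 := by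
          ring
        linarith
      have step : (1 + α * h - 2 * h ^ 2) * (1 + h) ^ (1 - α) ≤ (1 + h) ^ α * (1 + h) ^ (1 - α) := by
        rw [hmul]
        exact (mul_le_mul_of_nonneg_left hbg hc.le).trans step2
      exact le_of_mul_le_mul_right step hgpos
  have hs := sq_nonneg h
  rw [abs_le]
  constructor <;> linarith

lemma my_taylor {α s t : ℝ} (hα0 : 0 < α) (hα1 : α ≤ 1) (hs : 0 < s)
    (hts : |t - s| ≤ s / 2) :
    |t ^ α - s ^ α - α * s ^ (α - 1) * (t - s)| ≤ 2 * s ^ (α - 2) * (t - s) ^ 2 := by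
  set h := (t - s) / s with hh
  have hhb : |h| ≤ 1 / 2 := by
    rw [hh, abs_div, abs_of_pos hs, div_le_div_iff₀ hs (by norm_num)]
    linarith
  have hts' : t = s * (1 + h) := by rw [hh, mul_add, mul_one, mul_div_cancel₀ _ hs.ne']; ring
  have h1h : (0:ℝ) < 1 + h := by
    have := (abs_le.mp hhb).1; linarith
  have htα : t ^ α = s ^ α * (1 + h) ^ α := by
    rw [hts', Real.mul_rpow hs.le h1h.le]
  have hs1 : s ^ (α - 1) * s = s ^ α := by
    rw [← Real.rpow_add_one hs.ne']; ring_nf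
  have hs2 : s ^ (α - 2) * s ^ 2 = s ^ α := by
    rw [← Real.rpow_natCast s 2, ← Real.rpow_add hs]; norm_num
  have hsα : (0:ℝ) ≤ s ^ α := Real.rpow_nonneg hs.le α
  have e : t ^ α - s ^ α - α * s ^ (α - 1) * (t - s)
      = s ^ α * ((1 + h) ^ α - 1 - α * h) := by
    rw [htα]
    have : α * s ^ (α - 1) * (t - s) = s ^ α * (α * h) := by
      rw [hh, ← hs1]; field_simp
    rw [this]; ring
  have e2 : s ^ α * (2 * h ^ 2) = 2 * s ^ (α - 2) * (t - s) ^ 2 := by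
    rw [← hs2, hh]; field_simp
  rw [e, abs_mul, abs_of_nonneg hsα, ← e2]
  exact mul_le_mul_of_nonneg_left (my_bern2 hhb hα0 hα1) hsα

set_option maxHeartbeats 2000000 in
lemma my_key {α s b t u : ℝ} (hα0 : 0 < α) (hα1 : α ≤ 1) (hs : 0 ≤ s) (hb : 0 ≤ b)
    (ht : 0 ≤ t) (hts : |t - s| ≤ b) (hu : |u| ≤ s * b)
    (hsq : t ^ 2 = s ^ 2 + 2 * u + b ^ 2) :
    |t ^ α * (u + b ^ 2) - s ^ α * (u + b ^ 2) - α * s ^ (α - 2) * u ^ 2|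
      ≤ 5 * (b ^ α * b ^ 2) := by
  rcases eq_or_lt_of_le hb with hb0 | hb0
  · -- b = 0
    have h1 := abs_le.mp hts
    have h2 := abs_le.mp hu
    rw [← hb0] at h1 h2
    have ht0 : t = s := by linarith [h1.1, h1.2]
    have hu0 : u = 0 := by nlinarith [h2.1, h2.2]
    simp [ht0, hu0, ← hb0]
  -- b > 0
  have hΔ : |t ^ α - s ^ α| ≤ b ^ α := by
    refine (my_holder hα0 hα1 hs ht).trans ?_
    exact Real.rpow_le_rpow (abs_nonneg _) hts hα0.le
  have hbα : (0:ℝ) < b ^ α := Real.rpow_pos_of_pos hb0 α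
  have hu2 : u ^ 2 ≤ (s * b) ^ 2 := by
    rw [← sq_abs u]; exact pow_le_pow_left₀ (abs_nonneg u) hu 2
  rcases le_or_gt s (2 * b) with hcase | hcase
  · -- small s : s ≤ 2b
    have hub : |u + b ^ 2| ≤ 3 * b ^ 2 := by
      have := abs_le.mp hu
      rw [abs_le]; constructor <;> nlinarith [this.1, this.2]
    have t1 : |(t ^ α - s ^ α) * (u + b ^ 2)| ≤ b ^ α * (3 * b ^ 2) := by
      rw [abs_mul]
      exact mul_le_mul hΔ hub (abs_nonneg _) (Real.rpow_nonneg hb α)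
    have t2 : α * s ^ (α - 2) * u ^ 2 ≤ 2 * (b ^ α * b ^ 2) := by
      rcases eq_or_lt_of_le hs with hs0 | hs0
      · rw [← hs0, Real.zero_rpow (by intro hc; rw [sub_eq_zero] at hc; linarith : α - 2 ≠ 0)]
        have hpos : (0:ℝ) ≤ 2 * (b ^ α * b ^ 2) := by positivity
        simpa using hpos
      · have hsa : s ^ (α - 2) * u ^ 2 ≤ s ^ α * b ^ 2 := by
          have h1 : s ^ (α - 2) * u ^ 2 ≤ s ^ (α - 2) * (s ^ 2 * b ^ 2) := by
            have := Real.rpow_nonneg hs (α - 2)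
            nlinarith
          have h2 : s ^ (α - 2) * s ^ 2 = s ^ α := by
            rw [← Real.rpow_natCast s 2, ← Real.rpow_add hs0]; norm_num
          calc s ^ (α - 2) * u ^ 2 ≤ s ^ (α - 2) * (s ^ 2 * b ^ 2) := h1
            _ = s ^ α * b ^ 2 := by rw [← h2]; ring
        have hsb : s ^ α ≤ 2 * b ^ α := by
          calc s ^ α ≤ (2 * b) ^ α := Real.rpow_le_rpow hs hcase hα0.le
            _ = 2 ^ α * b ^ α := Real.mul_rpow (by norm_num) hb
            _ ≤ 2 * b ^ α := by
                have : (2:ℝ) ^ α ≤ 2 ^ (1:ℝ) :=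
                  Real.rpow_le_rpow_of_exponent_le one_le_two hα1
                rw [Real.rpow_one] at this
                nlinarith
        have hαb : α * s ^ (α - 2) * u ^ 2 ≤ 1 * (s ^ (α - 2) * u ^ 2) := by
          have : (0:ℝ) ≤ s ^ (α - 2) * u ^ 2 :=
            mul_nonneg (Real.rpow_nonneg hs _) (sq_nonneg u)
          nlinarith
        nlinarith [sq_nonneg b]
    have tri : |t ^ α * (u + b ^ 2) - s ^ α * (u + b ^ 2) - α * s ^ (α - 2) * u ^ 2|
        ≤ |(t ^ α - s ^ α) * (u + b ^ 2)| + α * s ^ (α - 2) * u ^ 2 := by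
      have h0 : (0:ℝ) ≤ α * s ^ (α - 2) * u ^ 2 := by positivity
      have e : t ^ α * (u + b ^ 2) - s ^ α * (u + b ^ 2) - α * s ^ (α - 2) * u ^ 2
          = (t ^ α - s ^ α) * (u + b ^ 2) - α * s ^ (α - 2) * u ^ 2 := by ring
      rw [e]
      refine (abs_sub _ _).trans ?_
      rw [abs_of_nonneg h0]
    calc |t ^ α * (u + b ^ 2) - s ^ α * (u + b ^ 2) - α * s ^ (α - 2) * u ^ 2|
        ≤ |(t ^ α - s ^ α) * (u + b ^ 2)| + α * s ^ (α - 2) * u ^ 2 := tri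
      _ ≤ b ^ α * (3 * b ^ 2) + 2 * (b ^ α * b ^ 2) := add_le_add t1 t2
      _ = 5 * (b ^ α * b ^ 2) := by ring
  · -- big s : 2b < s
    have hs0 : (0:ℝ) < s := by linarith
    have htsb : |t - s| ≤ s / 2 := hts.trans (by linarith)
    have hR := my_taylor hα0 hα1 hs0 htsb
    obtain ⟨R, hRdef⟩ : ∃ R, R = t ^ α - s ^ α - α * s ^ (α - 1) * (t - s) := ⟨_, rfl⟩
    rw [← hRdef] at hR
    have hs1 : s ^ (α - 1) = s ^ (α - 2) * s := by
      rw [← Real.rpow_add_one hs0.ne']; ring_nf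
    have hS2 : (0:ℝ) < s ^ (α - 2) := Real.rpow_pos_of_pos hs0 _
    have hS1 : (0:ℝ) < s ^ (α - 1) := Real.rpow_pos_of_pos hs0 _
    -- the decomposition identity
    have e : t ^ α * (u + b ^ 2) - s ^ α * (u + b ^ 2) - α * s ^ (α - 2) * u ^ 2
        = R * (u + b ^ 2) + α * s ^ (α - 1) * (t - s) * b ^ 2
          + α * s ^ (α - 2) * (u * (s * (t - s) - u)) := by
      rw [hRdef, hs1]; ring
    -- the cancellation
    have hcan : |s * (t - s) - u| ≤ b ^ 2 / 2 := by
      have hts2 : (t - s) ^ 2 ≤ b ^ 2 := by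
        rw [← sq_abs (t - s)]; exact pow_le_pow_left₀ (abs_nonneg _) hts 2
      have heq : s * (t - s) - u = (b ^ 2 - (t - s) ^ 2) / 2 := by linear_combination hsq / 2
      rw [heq, abs_le]
      constructor <;> linarith [hts2, sq_nonneg (t - s)]
    -- power comparisons
    have hb1 : s ^ (α - 1) ≤ b ^ (α - 1) :=
      Real.rpow_le_rpow_of_nonpos hb0 (by linarith) (by linarith)
    have hb2 : s ^ (α - 2) ≤ (1 / 2) * b ^ (α - 2) := by
      calc s ^ (α - 2) ≤ (2 * b) ^ (α - 2) :=
            Real.rpow_le_rpow_of_nonpos (by linarith) hcase.le (by linarith)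
        _ = 2 ^ (α - 2) * b ^ (α - 2) := Real.mul_rpow (by norm_num) hb
        _ ≤ (1 / 2) * b ^ (α - 2) := by
            have h1 : (2:ℝ) ^ (α - 2) ≤ 2 ^ (-1 : ℝ) :=
              Real.rpow_le_rpow_of_exponent_le one_le_two (by linarith)
            rw [Real.rpow_neg_one] at h1
            have : (0:ℝ) < b ^ (α - 2) := Real.rpow_pos_of_pos hb0 _
            nlinarith
    have hbm1 : b ^ (α - 1) * b = b ^ α := by
      rw [← Real.rpow_add_one hb0.ne']; ring_nf
    have hbm2 : b ^ (α - 2) * b ^ 2 = b ^ α := by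
      rw [← Real.rpow_natCast b 2, ← Real.rpow_add hb0]; norm_num
    -- bound each of the three terms
    have hb2' : (0:ℝ) < b ^ 2 := by positivity
    have hub : |u + b ^ 2| ≤ s * b + b ^ 2 := by
      have := abs_le.mp hu
      rw [abs_le]; constructor <;> nlinarith [this.1, this.2]
    have T1 : |R * (u + b ^ 2)| ≤ 3 * (b ^ α * b ^ 2) := by
      rw [abs_mul]
      have hRb : |R| ≤ 2 * s ^ (α - 2) * b ^ 2 := by
        refine hR.trans ?_
        have hts2 : (t - s) ^ 2 ≤ b ^ 2 := by
          rw [← sq_abs (t - s)]; exact pow_le_pow_left₀ (abs_nonneg _) hts 2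
        nlinarith
      calc |R| * |u + b ^ 2| ≤ (2 * s ^ (α - 2) * b ^ 2) * (s * b + b ^ 2) := by
            refine mul_le_mul hRb hub (abs_nonneg _) ?_
            positivity
        _ = 2 * (s ^ (α - 2) * s) * b ^ 2 * b + 2 * s ^ (α - 2) * b ^ 2 * b ^ 2 := by ring
        _ = 2 * s ^ (α - 1) * b ^ 2 * b + 2 * s ^ (α - 2) * b ^ 2 * b ^ 2 := by rw [hs1]
        _ ≤ 2 * b ^ (α - 1) * b ^ 2 * b + 2 * ((1/2) * b ^ (α - 2)) * b ^ 2 * b ^ 2 := by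
            have h1 : (0:ℝ) ≤ b ^ 2 * b := by positivity
            nlinarith [mul_le_mul_of_nonneg_right hb1 h1,
              mul_le_mul_of_nonneg_right hb2 (by positivity : (0:ℝ) ≤ b ^ 2 * b ^ 2)]
        _ = 2 * (b ^ (α - 1) * b) * b ^ 2 + (b ^ (α - 2) * b ^ 2) * b ^ 2 := by ring
        _ = 3 * (b ^ α * b ^ 2) := by rw [hbm1, hbm2]; ring
    have T2 : |α * s ^ (α - 1) * (t - s) * b ^ 2| ≤ b ^ α * b ^ 2 := by
      rw [abs_mul, abs_mul, abs_mul, abs_of_nonneg (by positivity : (0:ℝ) ≤ (α:ℝ)),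
        abs_of_nonneg hS1.le, abs_of_nonneg hb2'.le]
      have m1 : s ^ (α - 1) * |t - s| ≤ b ^ (α - 1) * b :=
        mul_le_mul hb1 hts (abs_nonneg _) (Real.rpow_nonneg hb _)
      calc α * s ^ (α - 1) * |t - s| * b ^ 2
          = (α * (s ^ (α - 1) * |t - s|)) * b ^ 2 := by ring
        _ ≤ (1 * (b ^ (α - 1) * b)) * b ^ 2 := by
            refine mul_le_mul_of_nonneg_right ?_ hb2'.le
            exact mul_le_mul hα1 m1 (mul_nonneg hS1.le (abs_nonneg _)) one_pos.le
        _ = (b ^ (α - 1) * b) * b ^ 2 := by ring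
        _ = b ^ α * b ^ 2 := by rw [hbm1]
    have T3 : |α * s ^ (α - 2) * (u * (s * (t - s) - u))| ≤ b ^ α * b ^ 2 := by
      rw [abs_mul, abs_mul, abs_mul, abs_of_nonneg (by positivity : (0:ℝ) ≤ (α:ℝ)),
        abs_of_nonneg hS2.le]
      have h1 : |u| * |s * (t - s) - u| ≤ (s * b) * (b ^ 2 / 2) := by
        exact mul_le_mul hu hcan (abs_nonneg _) (by positivity)
      have hX0 : (0:ℝ) ≤ |u| * |s * (t - s) - u| := mul_nonneg (abs_nonneg _) (abs_nonneg _)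
      calc α * s ^ (α - 2) * (|u| * |s * (t - s) - u|)
          ≤ 1 * s ^ (α - 2) * ((s * b) * (b ^ 2 / 2)) := by
            have c1 : (0:ℝ) ≤ (1 - α) * (s ^ (α - 2) * (|u| * |s * (t - s) - u|)) :=
              mul_nonneg (by linarith) (mul_nonneg hS2.le hX0)
            have c2 := mul_le_mul_of_nonneg_left h1 hS2.le
            nlinarith [c1, c2]
        _ = (s ^ (α - 2) * s) * b * b ^ 2 / 2 := by ring
        _ = s ^ (α - 1) * b * b ^ 2 / 2 := by rw [hs1]
        _ ≤ b ^ (α - 1) * b * b ^ 2 / 2 := by nlinarith [mul_le_mul_of_nonneg_right hb1 (by positivity : (0:ℝ) ≤ b * b ^ 2 / 2)]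
        _ = (b ^ (α - 1) * b) * b ^ 2 / 2 := by ring
        _ = b ^ α * b ^ 2 / 2 := by rw [hbm1]
        _ ≤ b ^ α * b ^ 2 := by nlinarith [mul_pos hbα hb2']
    calc |t ^ α * (u + b ^ 2) - s ^ α * (u + b ^ 2) - α * s ^ (α - 2) * u ^ 2|
        = |R * (u + b ^ 2) + α * s ^ (α - 1) * (t - s) * b ^ 2
            + α * s ^ (α - 2) * (u * (s * (t - s) - u))| := by rw [e]
      _ ≤ |R * (u + b ^ 2) + α * s ^ (α - 1) * (t - s) * b ^ 2|
            + |α * s ^ (α - 2) * (u * (s * (t - s) - u))| := abs_add_le _ _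
      _ ≤ |R * (u + b ^ 2)| + |α * s ^ (α - 1) * (t - s) * b ^ 2|
            + |α * s ^ (α - 2) * (u * (s * (t - s) - u))| := by
          linarith [abs_add_le (R * (u + b ^ 2)) (α * s ^ (α - 1) * (t - s) * b ^ 2)]
      _ ≤ 3 * (b ^ α * b ^ 2) + b ^ α * b ^ 2 + b ^ α * b ^ 2 := by linarith
      _ = 5 * (b ^ α * b ^ 2) := by ring

theorem stmt1 (n : ℕ) (p : ℝ) (hp : 2 < p) (hp' : p ≤ 3) :
    ∃ C > (0:ℝ), ∀ x y : EuclideanSpace ℝ (Fin n),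
      |‖x + y‖ ^ (p - 2) * (inner ℝ (x + y) y : ℝ)
        - ‖x‖ ^ (p - 2) * (inner ℝ (x + y) y : ℝ)
        - (p - 2) * ‖x‖ ^ (p - 4) * (inner ℝ x y : ℝ) ^ 2| ≤ C * ‖y‖ ^ p := by
  refine ⟨5, by norm_num, fun x y => ?_⟩
  have hia : (inner ℝ (x + y) y : ℝ) = (inner ℝ x y : ℝ) + ‖y‖ ^ 2 := by
    rw [inner_add_left, real_inner_self_eq_norm_sq]
  have hp4 : p - 4 = (p - 2) - 2 := by ring
  have hts : |‖x + y‖ - ‖x‖| ≤ ‖y‖ := by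
    have h := abs_norm_sub_norm_le (x + y) x
    simpa using h
  have hkey := my_key (α := p - 2) (s := ‖x‖) (b := ‖y‖) (t := ‖x + y‖)
    (u := (inner ℝ x y : ℝ)) (by linarith) (by linarith) (norm_nonneg x) (norm_nonneg y)
    (norm_nonneg (x + y)) hts (abs_real_inner_le_norm x y) (norm_add_sq_real x y)
  have hbp : ‖y‖ ^ (p - 2) * ‖y‖ ^ 2 = ‖y‖ ^ p := by
    rcases eq_or_lt_of_le (norm_nonneg y) with h0 | h0
    · rw [← h0, Real.zero_rpow (by intro hc; rw [sub_eq_zero] at hc; linarith : p - 2 ≠ 0),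
        Real.zero_rpow (by positivity : p ≠ 0)]
      ring
    · rw [← Real.rpow_natCast ‖y‖ 2, ← Real.rpow_add h0]
      norm_num
  rw [hia, hp4]
  calc |‖x + y‖ ^ (p - 2) * ((inner ℝ x y : ℝ) + ‖y‖ ^ 2)
        - ‖x‖ ^ (p - 2) * ((inner ℝ x y : ℝ) + ‖y‖ ^ 2)
        - (p - 2) * ‖x‖ ^ ((p - 2) - 2) * (inner ℝ x y : ℝ) ^ 2|
      ≤ 5 * (‖y‖ ^ (p - 2) * ‖y‖ ^ 2) := hkey
    _ = 5 * ‖y‖ ^ p := by rw [hbp]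
end

section
/- Let p > 3. Then there exists a constant C > 0, depending only on p and n, such that for all vectors x, y ∈ ℝⁿ: | |x+y|^{p-2} (x+y)·y − |x|^{p-2} (x+y)·y − (p−2)|x|^{p-4} (x·y)² | ≤ C(|y|^p + |x|^{p-3}|y|³). -/
open Real Set

lemma rpow_le_max {m M u z : ℝ} (hm : 0 < m) (h1 : m ≤ u) (h2 : u ≤ M) :
    u ^ z ≤ max (m ^ z) (M ^ z) := by
  rcases le_or_gt 0 z with hz | hz
  · exact le_max_of_le_right (Real.rpow_le_rpow (hm.le.trans h1) h2 hz)
  · exact le_max_of_le_left (Real.rpow_le_rpow_of_nonpos hm h1 hz.le)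

lemma mvt_rpow {r m M a b : ℝ} (hm : 0 < m) (ham : m ≤ a) (haM : a ≤ M)
    (hbm : m ≤ b) (hbM : b ≤ M) :
    |a ^ r - b ^ r| ≤ |r| * max (m ^ (r-1)) (M ^ (r-1)) * |a - b| := by
  have key : ∀ u ∈ Icc m M, HasDerivWithinAt (fun u : ℝ => u ^ r) (r * u ^ (r-1)) (Icc m M) u :=
    fun u hu => (Real.hasDerivAt_rpow_const (Or.inl (hm.trans_le hu.1).ne')).hasDerivWithinAt
  have bound : ∀ u ∈ Icc m M, ‖r * u ^ (r-1)‖ ≤ |r| * max (m ^ (r-1)) (M ^ (r-1)) := by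
    intro u hu
    rw [norm_mul, Real.norm_eq_abs, Real.norm_eq_abs,
      abs_of_nonneg (Real.rpow_nonneg (hm.le.trans hu.1) _)]
    exact mul_le_mul_of_nonneg_left (rpow_le_max hm hu.1 hu.2) (abs_nonneg r)
  have := (convex_Icc m M).norm_image_sub_le_of_norm_hasDerivWithin_le key bound
    ⟨hbm, hbM⟩ ⟨ham, haM⟩
  simpa [Real.norm_eq_abs] using this

lemma taylor2_rpow {κ m M w v : ℝ} (hm : 0 < m) (hwm : m ≤ w) (hwM : w ≤ M)
    (hvm : m ≤ v) (hvM : v ≤ M) :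
    |v ^ κ - w ^ κ - κ * w ^ (κ-1) * (v - w)|
      ≤ |κ| * (|κ-1| * max (m ^ (κ-1-1)) (M ^ (κ-1-1))) * (v - w)^2 := by
  set K : ℝ := |κ-1| * max (m ^ (κ-1-1)) (M ^ (κ-1-1)) with hK
  set s : Set ℝ := uIcc w v with hs
  have hsub : ∀ u ∈ s, m ≤ u ∧ u ≤ M ∧ |u - w| ≤ |v - w| := by
    intro u hu
    rcases le_total w v with h | h
    · rw [hs, uIcc_of_le h] at hu
      refine ⟨hwm.trans hu.1, hu.2.trans hvM, ?_⟩
      rw [abs_of_nonneg (by linarith [hu.1]), abs_of_nonneg (by linarith)]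
      linarith [hu.2]
    · rw [hs, uIcc_of_ge h] at hu
      refine ⟨hvm.trans hu.1, hu.2.trans hwM, ?_⟩
      rw [abs_of_nonpos (by linarith [hu.2]), abs_of_nonpos (by linarith)]
      linarith [hu.1]
  have key : ∀ u ∈ s, HasDerivWithinAt
      (fun u : ℝ => u ^ κ - w ^ κ - κ * w ^ (κ-1) * (u - w))
      (κ * u ^ (κ-1) - κ * w ^ (κ-1)) s u := by
    intro u hu
    have h1 : HasDerivAt (fun u : ℝ => u ^ κ) (κ * u ^ (κ-1)) u :=
      Real.hasDerivAt_rpow_const (Or.inl (hm.trans_le (hsub u hu).1).ne')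
    have h2 : HasDerivAt (fun u : ℝ => κ * w ^ (κ-1) * (u - w)) (κ * w ^ (κ-1)) u := by
      simpa using ((hasDerivAt_id u).sub_const w).const_mul (κ * w ^ (κ-1))
    exact ((h1.sub_const (w ^ κ)).sub h2).hasDerivWithinAt
  have bound : ∀ u ∈ s, ‖κ * u ^ (κ-1) - κ * w ^ (κ-1)‖ ≤ |κ| * (K * |v - w|) := by
    intro u hu
    obtain ⟨h1, h2, h3⟩ := hsub u hu
    have := mvt_rpow (r := κ - 1) hm h1 h2 hwm hwM
    rw [Real.norm_eq_abs, ← mul_sub, abs_mul]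
    refine mul_le_mul_of_nonneg_left (this.trans ?_) (abs_nonneg κ)
    rw [hK]
    have hKnn : (0:ℝ) ≤ |κ-1| * max (m ^ (κ-1-1)) (M ^ (κ-1-1)) :=
      mul_nonneg (abs_nonneg _) (le_max_iff.2 (Or.inl (Real.rpow_nonneg hm.le _)))
    exact mul_le_mul_of_nonneg_left h3 hKnn
  have hmem_w : w ∈ s := left_mem_uIcc
  have hmem_v : v ∈ s := right_mem_uIcc
  have := (convex_uIcc w v).norm_image_sub_le_of_norm_hasDerivWithin_le key bound hmem_w hmem_v
  simp only [Real.norm_eq_abs, sub_self, mul_zero, sub_zero] at this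
  calc |v ^ κ - w ^ κ - κ * w ^ (κ-1) * (v - w)| ≤ |κ| * (K * |v - w|) * |v - w| := this
    _ = |κ| * K * (v - w)^2 := by rw [← sq_abs (v - w)] ; ring
    _ = |κ| * (|κ-1| * max (m ^ (κ-1-1)) (M ^ (κ-1-1))) * (v - w)^2 := by rw [hK]

lemma sq_rpow' {t : ℝ} (ht : 0 ≤ t) (z : ℝ) : (t^2) ^ z = t ^ (2*z) := by
  rw [← Real.rpow_natCast t 2, ← Real.rpow_mul ht]; norm_num

lemma rpow_mul_sq {t : ℝ} (ht : 0 < t) (z : ℝ) : t ^ z * t^2 = t ^ (z+2) := by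
  rw [← Real.rpow_natCast t 2, ← Real.rpow_add ht]; norm_num

lemma rpow_mul_self' {t : ℝ} (ht : 0 < t) (z : ℝ) : t ^ z * t = t ^ (z+1) :=
  (Real.rpow_add_one ht.ne' z).symm

set_option maxHeartbeats 4000000 in
theorem stmt2 (n : ℕ) (p : ℝ) (hp : 3 < p) :
    ∃ C > (0:ℝ), ∀ x y : EuclideanSpace ℝ (Fin n),
      |‖x + y‖ ^ (p - 2) * (inner ℝ (x + y) y : ℝ)
        - ‖x‖ ^ (p - 2) * (inner ℝ (x + y) y : ℝ)
        - (p - 2) * ‖x‖ ^ (p - 4) * (inner ℝ x y : ℝ) ^ 2|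
        ≤ C * (‖y‖ ^ p + ‖x‖ ^ (p - 3) * ‖y‖ ^ (3:ℝ)) := by
  have hp2 : (0:ℝ) < p - 2 := by linarith
  have hp3 : (0:ℝ) < p - 3 := by linarith
  set K₀ : ℝ := max (((2:ℝ) ^ (p-6))⁻¹) ((3/2:ℝ) ^ (p-6)) with hK₀
  set K₁ : ℝ := |(p-2)/2| * (|(p-2)/2 - 1| * K₀) * (25/4) with hK₁
  set C₂ : ℝ := (p-2) * (3/2:ℝ) ^ (p-3) with hC₂
  set B : ℝ := C₂ + K₁ + (p-2)/2 with hB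
  set A : ℝ := (3:ℝ)^(p-1) + 3 * (2:ℝ)^(p-2) + (p-2) * (2:ℝ)^(p-2) with hA
  have hK₀nn : 0 ≤ K₀ := le_max_iff.2 (Or.inr (Real.rpow_nonneg (by norm_num) _))
  have hK₁nn : 0 ≤ K₁ := by
    apply mul_nonneg (mul_nonneg (abs_nonneg _) (mul_nonneg (abs_nonneg _) hK₀nn)); norm_num
  have hBnn : 0 ≤ B := by
    have : 0 ≤ C₂ := mul_nonneg hp2.le (Real.rpow_nonneg (by norm_num) _)
    rw [hB]; positivity
  have hAnn : 0 ≤ A := by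
    have h1 : 0 ≤ (3:ℝ)^(p-1) := Real.rpow_nonneg (by norm_num) _
    have h2 : 0 ≤ (2:ℝ)^(p-2) := Real.rpow_nonneg (by norm_num) _
    rw [hA]; positivity
  refine ⟨A + B + 1, by linarith, fun x y => ?_⟩
  set t : ℝ := ‖x‖ with htdef
  set r : ℝ := ‖y‖ with hrdef
  set s : ℝ := ‖x + y‖ with hsdef
  set C : ℝ := A + B + 1 with hC
  have ht0 : 0 ≤ t := norm_nonneg x
  have hr0 : 0 ≤ r := norm_nonneg y
  have hs0 : 0 ≤ s := norm_nonneg (x + y)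
  by_cases hy : y = 0
  · have hr' : r = 0 := by rw [hrdef, hy, norm_zero]
    have hi0 : (inner ℝ (x + y) y : ℝ) = 0 := by simp [hy]
    have hi1 : (inner ℝ x y : ℝ) = 0 := by simp [hy]
    have hC0 : 0 ≤ C := by rw [hC]; linarith
    rw [hi0, hi1, hr', Real.zero_rpow (show p ≠ 0 by linarith),
      Real.zero_rpow (show (3:ℝ) ≠ 0 by norm_num)]
    norm_num
  have hr : 0 < r := norm_pos_iff.2 hy
  set a : ℝ := (inner ℝ x y : ℝ) with hadef
  have hip : (inner ℝ (x + y) y : ℝ) = a + r^2 := by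
    rw [inner_add_left, hadef, real_inner_self_eq_norm_sq, hrdef]
  have ha : |a| ≤ t * r := abs_real_inner_le_norm x y
  have hsq : s^2 = t^2 + 2*a + r^2 := norm_add_sq_real x y
  have hs_ub : s ≤ t + r := norm_add_le x y
  have hst : |s - t| ≤ r := by
    have := abs_norm_sub_norm_le (x + y) x
    simpa [add_sub_cancel_left] using this
  have hr3 : r ^ (3:ℝ) = r ^ (3:ℕ) := by
    rw [← Real.rpow_natCast r 3]; norm_num
  have hrp : 0 ≤ r ^ p := Real.rpow_nonneg hr0 _
  have hex : 0 ≤ t ^ (p-3) * r ^ (3:ℝ) :=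
    mul_nonneg (Real.rpow_nonneg ht0 _) (Real.rpow_nonneg hr0 _)
  rw [hip]
  by_cases hx : x = 0
  · have ht' : t = 0 := by rw [htdef, hx]; simp
    have ha0 : a = 0 := by rw [hadef, hx]; simp
    have hs' : s = r := by rw [hsdef, hx, zero_add]
    rw [ht', ha0, hs', Real.zero_rpow (show p - 2 ≠ 0 by linarith),
      Real.zero_rpow (show p - 3 ≠ 0 by linarith)]
    have : |r ^ (p-2) * (0 + r^2) - 0 * (0 + r^2) - (p-2) * (0:ℝ)^(p-4) * 0^2|
        = r ^ (p-2) * r^2 := by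
      rw [show r ^ (p-2) * (0 + r^2) - 0 * (0 + r^2) - (p-2) * (0:ℝ)^(p-4) * 0^2
        = r ^ (p-2) * r^2 by ring]
      exact abs_of_nonneg (mul_nonneg (Real.rpow_nonneg hr0 _) (sq_nonneg r))
    rw [this, rpow_mul_sq hr, show p - 2 + 2 = p by ring]
    have h1 : (1:ℝ) ≤ C := by rw [hC]; linarith
    calc r ^ p = 1 * r ^ p := (one_mul _).symm
      _ ≤ C * r ^ p := mul_le_mul_of_nonneg_right h1 hrp
      _ ≤ C * (r ^ p + 0 * r ^ (3:ℝ)) := by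
          apply mul_le_mul_of_nonneg_left _ (by rw [hC]; linarith)
          simp
  have ht : 0 < t := norm_pos_iff.2 hx
  rcases le_or_gt t (2*r) with hcase | hcase
  · -- Case 1 : t ≤ 2r
    have hs3 : s ≤ 3 * r := by linarith
    have hipb : |a + r^2| ≤ 3 * r^2 := by
      rw [← hip]
      calc |(inner ℝ (x+y) y : ℝ)| ≤ s * r := abs_real_inner_le_norm _ _
        _ ≤ 3 * r * r := by nlinarith
        _ = 3 * r^2 := by ring
    have b1 : |s ^ (p-2) * (a + r^2)| ≤ (3:ℝ)^(p-1) * r ^ p := by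
      rw [abs_mul, abs_of_nonneg (Real.rpow_nonneg hs0 _)]
      calc s ^ (p-2) * |a + r^2| ≤ (3*r) ^ (p-2) * (3 * r^2) := by
            apply mul_le_mul (Real.rpow_le_rpow hs0 hs3 hp2.le) hipb (abs_nonneg _)
              (Real.rpow_nonneg (by positivity) _)
        _ = ((3:ℝ)^(p-2) * 3) * (r^(p-2) * r^2) := by
            rw [Real.mul_rpow (by norm_num) hr0]; ring
        _ = (3:ℝ)^(p-1) * r ^ p := by
            rw [rpow_mul_self' (by norm_num : (0:ℝ) < 3), rpow_mul_sq hr,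
              show p - 2 + 1 = p - 1 by ring, show p - 2 + 2 = p by ring]
    have b2 : |t ^ (p-2) * (a + r^2)| ≤ 3 * (2:ℝ)^(p-2) * r ^ p := by
      rw [abs_mul, abs_of_nonneg (Real.rpow_nonneg ht0 _)]
      calc t ^ (p-2) * |a + r^2| ≤ (2*r) ^ (p-2) * (3 * r^2) := by
            apply mul_le_mul (Real.rpow_le_rpow ht0 hcase hp2.le) hipb (abs_nonneg _)
              (Real.rpow_nonneg (by positivity) _)
        _ = 3 * (2:ℝ)^(p-2) * (r^(p-2) * r^2) := by
            rw [Real.mul_rpow (by norm_num) hr0]; ring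
        _ = 3 * (2:ℝ)^(p-2) * r ^ p := by
            rw [rpow_mul_sq hr, show p - 2 + 2 = p by ring]
    have b3 : |(p-2) * t ^ (p-4) * a^2| ≤ (p-2) * (2:ℝ)^(p-2) * r ^ p := by
      have ha2 : a^2 ≤ t^2 * r^2 := by nlinarith [sq_abs a, abs_nonneg a]
      have h1 : |(p-2) * t ^ (p-4) * a^2| = (p-2) * (t ^ (p-4) * a^2) := by
        rw [abs_of_nonneg (by positivity)]; ring
      rw [h1]
      have h2 : t ^ (p-4) * a^2 ≤ t ^ (p-4) * (t^2 * r^2) :=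
        mul_le_mul_of_nonneg_left ha2 (Real.rpow_nonneg ht0 _)
      have h3 : t ^ (p-4) * (t^2 * r^2) = t ^ (p-2) * r^2 := by
        rw [← mul_assoc, rpow_mul_sq ht, show p - 4 + 2 = p - 2 by ring]
      have h4 : t ^ (p-2) * r^2 ≤ (2*r)^(p-2) * r^2 :=
        mul_le_mul_of_nonneg_right (Real.rpow_le_rpow ht0 hcase hp2.le) (sq_nonneg r)
      have h5 : (2*r)^(p-2) * r^2 = (2:ℝ)^(p-2) * r ^ p := by
        rw [Real.mul_rpow (by norm_num) hr0, mul_assoc, rpow_mul_sq hr,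
          show p - 2 + 2 = p by ring]
      have := mul_le_mul_of_nonneg_left (h2.trans (h3 ▸ h4.trans_eq h5)) hp2.le
      calc (p-2) * (t ^ (p-4) * a^2) ≤ (p-2) * ((2:ℝ)^(p-2) * r ^ p) := this
        _ = (p-2) * (2:ℝ)^(p-2) * r ^ p := by ring
    calc |s ^ (p-2) * (a + r^2) - t ^ (p-2) * (a + r^2) - (p-2) * t ^ (p-4) * a^2|
        ≤ |s ^ (p-2) * (a + r^2) - t ^ (p-2) * (a + r^2)| + |(p-2) * t ^ (p-4) * a^2| :=
          abs_sub _ _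
      _ ≤ |s ^ (p-2) * (a + r^2)| + |t ^ (p-2) * (a + r^2)| + |(p-2) * t ^ (p-4) * a^2| := by
          linarith [abs_sub (s ^ (p-2) * (a + r^2)) (t ^ (p-2) * (a + r^2))]
      _ ≤ A * r ^ p := by rw [hA]; linarith
      _ ≤ C * (r ^ p + t ^ (p-3) * r ^ (3:ℝ)) := by
          have h1 : A ≤ C := by rw [hC]; linarith
          have h2 : 0 ≤ C := by rw [hC]; linarith
          calc A * r ^ p ≤ C * r ^ p := mul_le_mul_of_nonneg_right h1 hrp
            _ ≤ C * (r ^ p + t ^ (p-3) * r ^ (3:ℝ)) :=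
                mul_le_mul_of_nonneg_left (le_add_of_nonneg_right hex) h2
  · -- Case 2 : 2r < t
    have hs_lb : t - r ≤ s := by
      rcases abs_le.1 hst with ⟨h1, _⟩; linarith
    have hκ : (2:ℝ) * ((p-2)/2) = p - 2 := by ring
    have hT := taylor2_rpow (κ := (p-2)/2) (m := (t/2)^2) (M := (3*t/2)^2)
      (w := t^2) (v := s^2) (by positivity) (by nlinarith) (by nlinarith)
      (by nlinarith) (by nlinarith)
    rw [sq_rpow' hs0, sq_rpow' ht0, sq_rpow' ht0, sq_rpow' (by positivity : (0:ℝ) ≤ t/2),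
      sq_rpow' (by positivity : (0:ℝ) ≤ 3*t/2), hκ,
      show 2 * ((p-2)/2 - 1) = p - 4 by ring,
      show 2 * ((p-2)/2 - 1 - 1) = p - 6 by ring] at hT
    have hvw : s^2 - t^2 = 2*a + r^2 := by rw [hsq]; ring
    rw [hvw] at hT
    -- bound the max term
    have hmax : max ((t/2) ^ (p-6)) ((3*t/2) ^ (p-6)) = K₀ * t ^ (p-6) := by
      have e1 : (t/2) ^ (p-6) = ((2:ℝ)^(p-6))⁻¹ * t ^ (p-6) := by
        rw [Real.div_rpow ht0 (by norm_num)]; ring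
      have e2 : (3*t/2) ^ (p-6) = ((3/2:ℝ)^(p-6)) * t ^ (p-6) := by
        rw [show (3*t/2 : ℝ) = (3/2) * t by ring, Real.mul_rpow (by norm_num) ht0]
      rw [e1, e2, hK₀, max_mul_of_nonneg _ _ (Real.rpow_nonneg ht0 _)]
    rw [hmax] at hT
    -- bound (2a + r^2)^2
    have habs : |2*a + r^2| ≤ 5/2 * (t * r) := by
      have h1 : |2*a + r^2| ≤ 2*|a| + r^2 := by
        calc |2*a + r^2| ≤ |2*a| + |r^2| := abs_add_le _ _
          _ = 2*|a| + r^2 := by rw [abs_mul, abs_of_nonneg (sq_nonneg r)]; norm_num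
      have h2 : r^2 ≤ (t/2) * r := by nlinarith
      linarith
    have hsq2 : (2*a + r^2)^2 ≤ 25/4 * (t^2 * r^2) := by
      calc (2*a + r^2)^2 = |2*a + r^2|^2 := (sq_abs _).symm
        _ ≤ (5/2 * (t * r))^2 := by
            apply pow_le_pow_left₀ (abs_nonneg _) habs
        _ = 25/4 * (t^2 * r^2) := by ring
    have hR1 : |s ^ (p-2) - t ^ (p-2) - (p-2)/2 * t ^ (p-4) * (2*a + r^2)|
        ≤ K₁ * (t ^ (p-4) * r^2) := by
      refine hT.trans ?_
      have key : |(p-2)/2| * (|(p-2)/2 - 1| * (K₀ * t ^ (p-6))) * (25/4 * (t^2 * r^2))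
          = K₁ * (t ^ (p-4) * r^2) := by
        rw [hK₁]
        have : t ^ (p-6) * t^2 = t ^ (p-4) := by
          rw [rpow_mul_sq ht, show p - 6 + 2 = p - 4 by ring]
        calc |(p-2)/2| * (|(p-2)/2 - 1| * (K₀ * t ^ (p-6))) * (25/4 * (t^2 * r^2))
            = |(p-2)/2| * (|(p-2)/2 - 1| * K₀) * (25/4) * ((t ^ (p-6) * t^2) * r^2) := by ring
          _ = |(p-2)/2| * (|(p-2)/2 - 1| * K₀) * (25/4) * (t ^ (p-4) * r^2) := by rw [this]
      rw [← key]
      apply mul_le_mul_of_nonneg_left hsq2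
      exact mul_nonneg (abs_nonneg _) (mul_nonneg (abs_nonneg _)
        (mul_nonneg hK₀nn (Real.rpow_nonneg ht0 _)))
    -- bound D = s^{p-2} - t^{p-2}
    have hD : |s ^ (p-2) - t ^ (p-2)| ≤ C₂ * (t ^ (p-3) * r) := by
      have h1 := mvt_rpow (r := p-2) (m := t/2) (M := 3*t/2) (a := s) (b := t)
        (by positivity) (by linarith) (by linarith) (by linarith) (by linarith)
      have hmax2 : max ((t/2) ^ (p-2-1)) ((3*t/2) ^ (p-2-1)) = (3*t/2) ^ (p-3) := by
        rw [show p - 2 - 1 = p - 3 by ring]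
        exact max_eq_right (Real.rpow_le_rpow (by positivity) (by linarith) hp3.le)
      rw [hmax2, abs_of_pos hp2] at h1
      refine h1.trans ?_
      have e3 : (3*t/2 : ℝ) ^ (p-3) = (3/2:ℝ)^(p-3) * t ^ (p-3) := by
        rw [show (3*t/2 : ℝ) = (3/2) * t by ring, Real.mul_rpow (by norm_num) ht0]
      rw [e3, hC₂]
      calc (p-2) * ((3/2:ℝ)^(p-3) * t ^ (p-3)) * |s - t|
          ≤ (p-2) * ((3/2:ℝ)^(p-3) * t ^ (p-3)) * r := by
            apply mul_le_mul_of_nonneg_left hst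
            positivity
        _ = (p-2) * (3/2:ℝ)^(p-3) * (t ^ (p-3) * r) := by ring
    -- assemble
    have hEeq : s ^ (p-2) * (a + r^2) - t ^ (p-2) * (a + r^2) - (p-2) * t ^ (p-4) * a^2
        = (s ^ (p-2) - t ^ (p-2)) * r^2
          + (s ^ (p-2) - t ^ (p-2) - (p-2)/2 * t ^ (p-4) * (2*a + r^2)) * a
          + ((p-2)/2 * t ^ (p-4) * r^2) * a := by ring
    have ht34 : t ^ (p-4) * t = t ^ (p-3) := by
      rw [rpow_mul_self' ht, show p - 4 + 1 = p - 3 by ring]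
    have e1 : |(s ^ (p-2) - t ^ (p-2)) * r^2| ≤ C₂ * (t ^ (p-3) * r^3) := by
      rw [abs_mul, abs_of_nonneg (sq_nonneg r)]
      calc |s ^ (p-2) - t ^ (p-2)| * r^2 ≤ (C₂ * (t ^ (p-3) * r)) * r^2 := by
            apply mul_le_mul_of_nonneg_right hD (sq_nonneg r)
        _ = C₂ * (t ^ (p-3) * r^3) := by ring
    have e2 : |(s ^ (p-2) - t ^ (p-2) - (p-2)/2 * t ^ (p-4) * (2*a + r^2)) * a|
        ≤ K₁ * (t ^ (p-3) * r^3) := by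
      rw [abs_mul]
      calc |s ^ (p-2) - t ^ (p-2) - (p-2)/2 * t ^ (p-4) * (2*a + r^2)| * |a|
          ≤ (K₁ * (t ^ (p-4) * r^2)) * (t * r) := by
            apply mul_le_mul hR1 ha (abs_nonneg a)
            exact mul_nonneg hK₁nn (mul_nonneg (Real.rpow_nonneg ht0 _) (sq_nonneg r))
        _ = K₁ * ((t ^ (p-4) * t) * r^3) := by ring
        _ = K₁ * (t ^ (p-3) * r^3) := by rw [ht34]
    have e3 : |((p-2)/2 * t ^ (p-4) * r^2) * a| ≤ (p-2)/2 * (t ^ (p-3) * r^3) := by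
      rw [abs_mul, abs_of_nonneg (by positivity : (0:ℝ) ≤ (p-2)/2 * t ^ (p-4) * r^2)]
      calc ((p-2)/2 * t ^ (p-4) * r^2) * |a| ≤ ((p-2)/2 * t ^ (p-4) * r^2) * (t * r) := by
            apply mul_le_mul_of_nonneg_left ha (by positivity)
        _ = (p-2)/2 * ((t ^ (p-4) * t) * r^3) := by ring
        _ = (p-2)/2 * (t ^ (p-3) * r^3) := by rw [ht34]
    have hr3' : t ^ (p-3) * r ^ (3:ℝ) = t ^ (p-3) * r^3 := by rw [hr3]
    calc |s ^ (p-2) * (a + r^2) - t ^ (p-2) * (a + r^2) - (p-2) * t ^ (p-4) * a^2|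
        ≤ |(s ^ (p-2) - t ^ (p-2)) * r^2|
          + |(s ^ (p-2) - t ^ (p-2) - (p-2)/2 * t ^ (p-4) * (2*a + r^2)) * a|
          + |((p-2)/2 * t ^ (p-4) * r^2) * a| := by
          rw [hEeq]
          exact (abs_add_le _ _).trans (add_le_add_left (abs_add_le _ _) _)
      _ ≤ B * (t ^ (p-3) * r^3) := by rw [hB]; linarith
      _ ≤ C * (r ^ p + t ^ (p-3) * r ^ (3:ℝ)) := by
          rw [hr3']
          have h1 : B ≤ C := by rw [hC]; linarith
          have h2 : 0 ≤ C := by rw [hC]; linarith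
          have h3 : 0 ≤ t ^ (p-3) * r^3 :=
            mul_nonneg (Real.rpow_nonneg ht0 _) (pow_nonneg hr0 3)
          calc B * (t ^ (p-3) * r^3) ≤ C * (t ^ (p-3) * r^3) :=
                mul_le_mul_of_nonneg_right h1 h3
            _ ≤ C * (r ^ p + t ^ (p-3) * r^3) :=
                mul_le_mul_of_nonneg_left (le_add_of_nonneg_left hrp) h2
end

section
/- Let 2 < p ≤ 3. Then there exists a constant C > 0, depending only on p and n, such that for all vectors x, y ∈ ℝⁿ: | |x+y|^{p-2} (x+y)·y − |y|^p − |x|^{p-2} x·y | ≤ C|x|^{p-2}|y|². -/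
private lemma aux1 {α u v : ℝ} (hα0 : 0 ≤ α) (hα1 : α ≤ 1) (hv : 0 ≤ v) (hvu : v ≤ u) :
    u ^ α - v ^ α ≤ (u - v) ^ α := by
  have hu : 0 ≤ u := hv.trans hvu
  have huv : 0 ≤ u - v := sub_nonneg.2 hvu
  have key := NNReal.rpow_add_le_add_rpow (u - v).toNNReal v.toNNReal hα0 hα1
  have hsum : (u - v).toNNReal + v.toNNReal = u.toNNReal := by
    rw [← Real.toNNReal_add huv hv, sub_add_cancel]
  rw [hsum] at key
  have h2 := NNReal.coe_le_coe.2 key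
  push_cast [Real.coe_toNNReal _ hu, Real.coe_toNNReal _ hv, Real.coe_toNNReal _ huv] at h2
  linarith

private lemma aux1' {α u v : ℝ} (hα0 : 0 ≤ α) (hα1 : α ≤ 1) (hu : 0 ≤ u) (hv : 0 ≤ v) :
    |u ^ α - v ^ α| ≤ |u - v| ^ α := by
  rcases le_total v u with h | h
  · rw [abs_of_nonneg (sub_nonneg.2 (Real.rpow_le_rpow hv h hα0)),
      abs_of_nonneg (sub_nonneg.2 h)]
    exact aux1 hα0 hα1 hv h
  · rw [abs_of_nonpos (sub_nonpos.2 (Real.rpow_le_rpow hu h hα0)),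
      abs_of_nonpos (sub_nonpos.2 h), neg_sub, neg_sub]
    exact aux1 hα0 hα1 hu h

private lemma aux2 {α u v : ℝ} (hα0 : 0 ≤ α) (hα1 : α ≤ 1) (hv : 0 < v) (hvu : v ≤ u) :
    u ^ α - v ^ α ≤ α * v ^ (α - 1) * (u - v) := by
  have hs : (0:ℝ) ≤ (u - v) / v := div_nonneg (by linarith) hv.le
  have hb := rpow_one_add_le_one_add_mul_self (by linarith : (-1:ℝ) ≤ (u - v) / v) hα0 hα1
  have h1 : 1 + (u - v) / v = u / v := by field_simp; ring
  rw [h1] at hb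
  have hvα : 0 < v ^ α := Real.rpow_pos_of_pos hv α
  have hmul : u ^ α = (u / v) ^ α * v ^ α := by
    rw [← Real.mul_rpow (div_nonneg (by linarith) hv.le) hv.le, div_mul_cancel₀]
    exact hv.ne'
  have h3 : u ^ α ≤ (1 + α * ((u - v) / v)) * v ^ α := by
    rw [hmul]; exact mul_le_mul_of_nonneg_right hb hvα.le
  have hv1 : v ^ (α - 1) = v ^ α / v := by
    rw [Real.rpow_sub hv, Real.rpow_one]
  have h4 : (1 + α * ((u - v) / v)) * v ^ α = v ^ α + α * v ^ (α - 1) * (u - v) := by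
    rw [hv1]; field_simp
  linarith [h3, h4.ge]

private lemma aux2' {α m u v : ℝ} (hα0 : 0 ≤ α) (hα1 : α ≤ 1) (hm : 0 < m)
    (hmu : m ≤ u) (hmv : m ≤ v) :
    |u ^ α - v ^ α| ≤ α * m ^ (α - 1) * |u - v| := by
  have hkey : ∀ w z : ℝ, m ≤ w → m ≤ z → z ≤ w →
      w ^ α - z ^ α ≤ α * m ^ (α - 1) * (w - z) := by
    intro w z hw hz hzw
    have h1 := aux2 hα0 hα1 (hm.trans_le hz) hzw
    have h2 : z ^ (α - 1) ≤ m ^ (α - 1) :=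
      Real.rpow_le_rpow_of_nonpos hm hz (by linarith)
    have := mul_le_mul_of_nonneg_right (mul_le_mul_of_nonneg_left h2 hα0)
      (by linarith : (0:ℝ) ≤ w - z)
    linarith
  rcases le_total v u with h | h
  · rw [abs_of_nonneg (sub_nonneg.2 (Real.rpow_le_rpow (hm.le.trans hmv) h hα0)),
      abs_of_nonneg (sub_nonneg.2 h)]
    exact hkey u v hmu hmv h
  · rw [abs_of_nonpos (sub_nonpos.2 (Real.rpow_le_rpow (hm.le.trans hmu) h hα0)),
      abs_of_nonpos (sub_nonpos.2 h), neg_sub, neg_sub]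
    exact hkey v u hmv hmu h

theorem stmt3 (n : ℕ) (p : ℝ) (hp : 2 < p) (hp' : p ≤ 3) :
    ∃ C > (0:ℝ), ∀ x y : EuclideanSpace ℝ (Fin n),
      |‖x + y‖ ^ (p - 2) * (inner ℝ (x + y) y : ℝ) - ‖y‖ ^ p
        - ‖x‖ ^ (p - 2) * (inner ℝ x y : ℝ)| ≤ C * (‖x‖ ^ (p - 2) * ‖y‖ ^ (2:ℝ)) := by
  refine ⟨3, by norm_num, fun x y => ?_⟩
  have hα0 : (0:ℝ) < p - 2 := by linarith
  have hα1 : p - 2 ≤ 1 := by linarith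
  set α := p - 2 with hαdef
  set a := ‖x‖ with hadef
  set b := ‖y‖ with hbdef
  set u := ‖x + y‖ with hudef
  have ha0 : 0 ≤ a := norm_nonneg x
  have hb0 : 0 ≤ b := norm_nonneg y
  have hu0 : 0 ≤ u := norm_nonneg _
  have hb2 : b ^ (2:ℝ) = b ^ 2 := Real.rpow_two b
  rw [hb2]
  have hinner : (inner ℝ (x + y) y : ℝ) = (inner ℝ x y : ℝ) + b ^ 2 := by
    rw [inner_add_left, real_inner_self_eq_norm_sq]
  by_cases hy : y = 0
  · have hb' : b = 0 := by rw [hbdef, hy, norm_zero]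
    rw [hb', hy]
    simp [Real.zero_rpow (show p ≠ 0 by linarith)]
  have hb : 0 < b := norm_pos_iff.2 hy
  by_cases hx : x = 0
  · subst hx
    have hzα : (0:ℝ) ^ α = 0 := Real.zero_rpow hα0.ne'
    have hbp : b ^ p = b ^ α * b ^ 2 := by
      have hαp : α + 2 = p := by rw [hαdef]; ring
      rw [← hαp, Real.rpow_add hb, hb2]
    simp only [hadef, norm_zero, hzα, zero_mul, mul_zero]
    have hzu : u = b := by rw [hudef, hbdef, zero_add]
    rw [hzu, hinner, inner_zero_left, hbp]
    simp
  have ha : 0 < a := norm_pos_iff.2 hx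
  set s := (inner ℝ x y : ℝ) with hsdef
  have hbp : b ^ p = b ^ α * b ^ 2 := by
    have hαp : α + 2 = p := by rw [hαdef]; ring
    rw [← hαp, Real.rpow_add hb, hb2]
  have hexpr : u ^ α * (inner ℝ (x + y) y : ℝ) - b ^ p - a ^ α * s
      = (u ^ α - a ^ α) * s + (u ^ α - b ^ α) * b ^ 2 := by
    rw [hinner, hbp]; ring
  rw [hexpr]
  have hs : |s| ≤ a * b := abs_real_inner_le_norm x y
  have hub : |u - b| ≤ a := by
    have h := abs_norm_sub_norm_le (x + y) y
    rwa [add_sub_cancel_right] at h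
  have hua : |u - a| ≤ b := by
    have h := abs_norm_sub_norm_le (x + y) x
    rwa [add_sub_cancel_left] at h
  have T2 : |u ^ α - b ^ α| * b ^ 2 ≤ a ^ α * b ^ 2 := by
    have h1 : |u ^ α - b ^ α| ≤ |u - b| ^ α := aux1' hα0.le hα1 hu0 hb0
    have h2 : |u - b| ^ α ≤ a ^ α := Real.rpow_le_rpow (abs_nonneg _) hub hα0.le
    exact mul_le_mul_of_nonneg_right (h1.trans h2) (sq_nonneg b)
  have haα : 0 < a ^ α := Real.rpow_pos_of_pos ha α
  have T1 : |u ^ α - a ^ α| * |s| ≤ 2 * (a ^ α * b ^ 2) := by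
    rcases le_total a (2 * b) with hc | hc
    · -- a ≤ 2b case
      have h1 : |u ^ α - a ^ α| ≤ |u - a| ^ α := aux1' hα0.le hα1 hu0 ha0
      have h2 : |u - a| ^ α ≤ b ^ α := Real.rpow_le_rpow (abs_nonneg _) hua hα0.le
      have h3 : |u ^ α - a ^ α| * |s| ≤ b ^ α * (a * b) := by
        apply mul_le_mul (h1.trans h2) hs (abs_nonneg _)
        exact Real.rpow_nonneg hb0 α
      refine h3.trans ?_
      -- b^α * (a*b) ≤ 2 * (a^α * b^2)
      have e1 : a ^ (1 - α) ≤ 2 * b ^ (1 - α) := by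
        calc a ^ (1 - α) ≤ (2 * b) ^ (1 - α) :=
              Real.rpow_le_rpow ha0 hc (by linarith)
          _ = 2 ^ (1 - α) * b ^ (1 - α) :=
              Real.mul_rpow (by norm_num) hb0
          _ ≤ 2 * b ^ (1 - α) := by
              have : (2:ℝ) ^ (1 - α) ≤ 2 ^ (1:ℝ) :=
                Real.rpow_le_rpow_of_exponent_le one_le_two (by linarith)
              rw [Real.rpow_one] at this
              exact mul_le_mul_of_nonneg_right this (Real.rpow_nonneg hb0 _)
      have e2 : a ^ α * a ^ (1 - α) = a := by
        rw [← Real.rpow_add ha]; norm_num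
      have e3 : b ^ α * b ^ (1 - α) = b := by
        rw [← Real.rpow_add hb]; norm_num
      have hbα : 0 < b ^ α := Real.rpow_pos_of_pos hb α
      have hb1α : 0 < b ^ (1 - α) := Real.rpow_pos_of_pos hb _
      -- b^α * (a*b) = b^α * a^α * a^(1-α) * b  ≤ b^α * a^α * 2 * b^(1-α) * b = 2 a^α b^2
      have h5 : a ^ α * (b ^ α * b) * a ^ (1 - α) ≤ a ^ α * (b ^ α * b) * (2 * b ^ (1 - α)) :=
        mul_le_mul_of_nonneg_left e1 (by positivity)
      calc b ^ α * (a * b) = a ^ α * (b ^ α * b) * a ^ (1 - α) := by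
            linear_combination (-(b ^ α * b)) * e2
        _ ≤ a ^ α * (b ^ α * b) * (2 * b ^ (1 - α)) := h5
        _ = 2 * (a ^ α * b ^ 2) := by
            linear_combination (2 * a ^ α * b) * e3
    · -- 2b ≤ a case
      have ha2 : 0 < a / 2 := by linarith
      have hmu : a / 2 ≤ u := by
        have := abs_le.1 hua
        linarith [this.1]
      have hma : a / 2 ≤ a := by linarith
      have h1 : |u ^ α - a ^ α| ≤ α * (a / 2) ^ (α - 1) * b := by
        have := aux2' hα0.le hα1 ha2 hmu hma
        have h2 := mul_le_mul_of_nonneg_left hua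
          (by positivity : (0:ℝ) ≤ α * (a / 2) ^ (α - 1))
        linarith
      have h3 : |u ^ α - a ^ α| * |s| ≤ (α * (a / 2) ^ (α - 1) * b) * (a * b) := by
        apply mul_le_mul h1 hs (abs_nonneg _)
        positivity
      refine h3.trans ?_
      have e1 : (a / 2) ^ (α - 1) = a ^ (α - 1) * ((2:ℝ) ^ (α - 1))⁻¹ := by
        rw [Real.div_rpow ha0 (by norm_num : (0:ℝ) ≤ 2), div_eq_mul_inv]
      have e2 : ((2:ℝ) ^ (α - 1))⁻¹ = 2 ^ (1 - α) := by
        rw [← Real.rpow_neg (by norm_num : (0:ℝ) ≤ 2), neg_sub]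
      have e3 : (2:ℝ) ^ (1 - α) ≤ 2 := by
        have : (2:ℝ) ^ (1 - α) ≤ 2 ^ (1:ℝ) :=
          Real.rpow_le_rpow_of_exponent_le one_le_two (by linarith)
        rwa [Real.rpow_one] at this
      have e4 : a ^ (α - 1) * a = a ^ α := by
        have : a ^ (α - 1) * a ^ (1:ℝ) = a ^ (α - 1 + 1) := (Real.rpow_add ha _ _).symm
        rw [Real.rpow_one] at this
        rw [this]; norm_num
      have ha1 : 0 < a ^ (α - 1) := Real.rpow_pos_of_pos ha _
      calc (α * (a / 2) ^ (α - 1) * b) * (a * b)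
          = α * 2 ^ (1 - α) * (a ^ (α - 1) * a) * b ^ 2 := by
            rw [e1, e2]; ring
        _ = α * 2 ^ (1 - α) * (a ^ α * b ^ 2) := by rw [e4]; ring
        _ ≤ 2 * (a ^ α * b ^ 2) := by
            have hprod : α * 2 ^ (1 - α) ≤ 2 := by
              have h2pos : (0:ℝ) < 2 ^ (1 - α) := Real.rpow_pos_of_pos (by norm_num) _
              nlinarith
            have : 0 ≤ a ^ α * b ^ 2 := by positivity
            exact mul_le_mul_of_nonneg_right hprod this
  calc |(u ^ α - a ^ α) * s + (u ^ α - b ^ α) * b ^ 2|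
      ≤ |u ^ α - a ^ α| * |s| + |u ^ α - b ^ α| * b ^ 2 := by
        refine (abs_add_le _ _).trans ?_
        rw [abs_mul, abs_mul, abs_of_nonneg (sq_nonneg b)]
    _ ≤ 2 * (a ^ α * b ^ 2) + a ^ α * b ^ 2 := add_le_add T1 T2
    _ = 3 * (a ^ α * b ^ 2) := by ring
end

section
/- Let p > 3. Then there exists a constant C > 0, depending only on p and n, such that for all vectors x, y ∈ ℝⁿ: | |x+y|^{p-2} (x+y)·y − |y|^p − |x|^{p-2} x·y | ≤ C(|x|^{p-2}|y|² + |x||y|^{p-1}). -/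
open Real

-- MVT-type estimate via Bernoulli
lemma aux1_s4 {q s t : ℝ} (hq : 1 ≤ q) (ht : 0 ≤ t) (hts : t ≤ s) :
    s ^ q - t ^ q ≤ q * s ^ (q - 1) * (s - t) := by
  rcases eq_or_lt_of_le (ht.trans hts) with hs | hs
  · have hs0 : s = 0 := hs.symm
    have ht0 : t = 0 := le_antisymm (hs0 ▸ hts) ht
    subst hs0; subst ht0
    rw [Real.zero_rpow (by linarith : q ≠ 0)]
    simp
  · set u := t / s - 1 with hu
    have hu1 : -1 ≤ u := by
      have : 0 ≤ t / s := div_nonneg ht hs.le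
      simp [hu]; linarith
    have hber := one_add_mul_self_le_rpow_one_add hu1 hq
    have h1u : 1 + u = t / s := by ring
    rw [h1u] at hber
    have hts' : (t / s) ^ q = t ^ q / s ^ q := Real.div_rpow ht hs.le q
    rw [hts'] at hber
    have hsq : (0:ℝ) < s ^ q := Real.rpow_pos_of_pos hs q
    have hqs : s ^ (q - 1) = s ^ q / s := by
      rw [Real.rpow_sub hs, Real.rpow_one]
    rw [hqs]
    have key : s ^ q * (1 + q * u) ≤ t ^ q := by
      calc s ^ q * (1 + q * u) ≤ s ^ q * (t ^ q / s ^ q) :=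
            mul_le_mul_of_nonneg_left hber hsq.le
        _ = t ^ q := by field_simp
    have : q * u = q * t / s - q := by rw [hu]; ring
    rw [this] at key
    have : s ^ q * (1 + (q * t / s - q)) = s ^ q + q * (s ^ q / s) * t - q * s ^ q := by
      field_simp; ring
    rw [this] at key
    have hss : s ^ q / s * s = s ^ q := div_mul_cancel₀ _ hs.ne'
    nlinarith [key, hss]

lemma aux2_s4 {q s t : ℝ} (hq : 1 ≤ q) (hs : 0 ≤ s) (ht : 0 ≤ t) :
    |s ^ q - t ^ q| ≤ q * (max s t) ^ (q - 1) * |s - t| := by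
  rcases le_total t s with h | h
  · rw [max_eq_left h, abs_of_nonneg (by linarith : (0:ℝ) ≤ s - t),
      abs_of_nonneg (sub_nonneg.2 (Real.rpow_le_rpow ht h (by linarith)))]
    exact aux1_s4 hq ht h
  · rw [max_eq_right h, abs_sub_comm, abs_sub_comm s t,
      abs_of_nonneg (by linarith : (0:ℝ) ≤ t - s),
      abs_of_nonneg (sub_nonneg.2 (Real.rpow_le_rpow hs h (by linarith)))]
    exact aux1_s4 hq hs h

lemma aux3 {E : Type*} [NormedAddCommGroup E] [NormedSpace ℝ E] {q : ℝ} (hq : 1 ≤ q)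
    (a b : E) :
    ‖(‖a‖ ^ q) • a - (‖b‖ ^ q) • b‖ ≤ (q + 1) * (max ‖a‖ ‖b‖) ^ q * ‖a - b‖ := by
  set m := max ‖a‖ ‖b‖ with hm
  have hm0 : 0 ≤ m := le_trans (norm_nonneg a) (le_max_left _ _)
  rcases eq_or_lt_of_le hm0 with hm0' | hm0'
  · have ha : a = 0 := norm_le_zero_iff.1 (hm0' ▸ (le_max_left ‖a‖ ‖b‖))
    have hb : b = 0 := norm_le_zero_iff.1 (hm0' ▸ (le_max_right ‖a‖ ‖b‖))
    simp [ha, hb]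
  · have key : (‖a‖ ^ q) • a - (‖b‖ ^ q) • b
        = (‖a‖ ^ q) • (a - b) + (‖a‖ ^ q - ‖b‖ ^ q) • b := by
      rw [smul_sub, sub_smul]; abel
    rw [key]
    have h1 : ‖(‖a‖ ^ q) • (a - b)‖ ≤ m ^ q * ‖a - b‖ := by
      rw [norm_smul, Real.norm_eq_abs, abs_of_nonneg (Real.rpow_nonneg (norm_nonneg a) q)]
      exact mul_le_mul_of_nonneg_right
        (Real.rpow_le_rpow (norm_nonneg a) (le_max_left _ _) (by linarith)) (norm_nonneg _)
    have h2 : ‖(‖a‖ ^ q - ‖b‖ ^ q) • b‖ ≤ q * m ^ q * ‖a - b‖ := by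
      rw [norm_smul, Real.norm_eq_abs]
      have := aux2_s4 hq (norm_nonneg a) (norm_nonneg b)
      have habs : |‖a‖ - ‖b‖| ≤ ‖a - b‖ := abs_norm_sub_norm_le a b
      have hmq : m ^ (q - 1) * m = m ^ q := by
        rw [← Real.rpow_add_one hm0'.ne' (q - 1)]; ring_nf
      have hb : ‖b‖ ≤ m := le_max_right _ _
      calc |‖a‖ ^ q - ‖b‖ ^ q| * ‖b‖
          ≤ (q * m ^ (q - 1) * ‖a - b‖) * m := by
            apply mul_le_mul _ hb (norm_nonneg b) _
            · exact le_trans this (by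
                apply mul_le_mul_of_nonneg_left habs
                positivity)
            · positivity
        _ = q * m ^ q * ‖a - b‖ := by rw [← hmq]; ring
    calc ‖(‖a‖ ^ q) • (a - b) + (‖a‖ ^ q - ‖b‖ ^ q) • b‖
        ≤ ‖(‖a‖ ^ q) • (a - b)‖ + ‖(‖a‖ ^ q - ‖b‖ ^ q) • b‖ := norm_add_le _ _
      _ ≤ m ^ q * ‖a - b‖ + q * m ^ q * ‖a - b‖ := add_le_add h1 h2
      _ = (q + 1) * m ^ q * ‖a - b‖ := by ring

theorem stmt4 (n : ℕ) (p : ℝ) (hp : 3 < p) :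
    ∃ C > (0:ℝ), ∀ x y : EuclideanSpace ℝ (Fin n),
      |‖x + y‖ ^ (p - 2) * (inner ℝ (x + y) y : ℝ) - ‖y‖ ^ p
        - ‖x‖ ^ (p - 2) * (inner ℝ x y : ℝ)|
        ≤ C * (‖x‖ ^ (p - 2) * ‖y‖ ^ (2:ℝ) + ‖x‖ * ‖y‖ ^ (p - 1)) := by
  set q : ℝ := p - 2 with hqdef
  have hq1 : 1 < q := by simp [hqdef]; linarith
  have h2q : (0:ℝ) < 2 ^ q := Real.rpow_pos_of_pos (by norm_num) q
  refine ⟨(q + 1) * 2 ^ q + 1, by nlinarith, fun x y => ?_⟩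
  set D : EuclideanSpace ℝ (Fin n) :=
    (‖x + y‖ ^ q) • (x + y) - (‖y‖ ^ q) • y - (‖x‖ ^ q) • x with hD
  have hyp : ‖y‖ ^ p = ‖y‖ ^ q * (inner ℝ y y : ℝ) := by
    rw [real_inner_self_eq_norm_sq, show (‖y‖:ℝ)^(2:ℕ) = ‖y‖^((2:ℕ):ℝ) from
      (Real.rpow_natCast _ 2).symm]
    rw [← Real.rpow_add' (norm_nonneg y) (by push_cast; linarith)]
    norm_num [hqdef]
  have hF : ‖x + y‖ ^ q * (inner ℝ (x + y) y : ℝ) - ‖y‖ ^ p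
      - ‖x‖ ^ q * (inner ℝ x y : ℝ) = (inner ℝ D y : ℝ) := by
    rw [hD, inner_sub_left, inner_sub_left, real_inner_smul_left, real_inner_smul_left,
      real_inner_smul_left, hyp]
  rw [hF]
  have hDy : |(inner ℝ D y : ℝ)| ≤ ‖D‖ * ‖y‖ := abs_real_inner_le_norm D y
  have hrhs : ∀ c : ℝ, 0 ≤ c → ∀ A B : ℝ, 0 ≤ A → 0 ≤ B → True := fun _ _ _ _ _ _ => trivial
  have hA : (0:ℝ) ≤ ‖x‖ ^ q * ‖y‖ ^ (2:ℝ) := by positivity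
  have hC : (0:ℝ) ≤ (q + 1) * 2 ^ q + 1 := by nlinarith
  have hB : (0:ℝ) ≤ ‖x‖ * ‖y‖ ^ (p - 1) := by positivity
  have hy2 : ‖y‖ ^ (2:ℝ) = ‖y‖ * ‖y‖ := by
    rw [show ((2:ℝ)) = ((2:ℕ):ℝ) by norm_num, Real.rpow_natCast]; ring
  have hyq1 : ‖y‖ ^ (p - 1) = ‖y‖ ^ q * ‖y‖ := by
    rw [show p - 1 = q + 1 by simp [hqdef]; ring, Real.rpow_add' (norm_nonneg y)
      (by linarith), Real.rpow_one]
  rcases le_total ‖x‖ ‖y‖ with hxy | hxy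
  · -- ‖x‖ ≤ ‖y‖ : use |F| ≤ C ‖x‖ ‖y‖^{p-1}
    have hsplit : ‖D‖ ≤ ‖(‖x + y‖ ^ q) • (x + y) - (‖y‖ ^ q) • y‖ + ‖(‖x‖ ^ q) • x‖ := by
      rw [hD]; exact norm_sub_le _ _
    have h3 := aux3 hq1.le (x + y) y
    rw [add_sub_cancel_right] at h3
    have hmax : max ‖x + y‖ ‖y‖ ≤ 2 * ‖y‖ := by
      apply max_le
      · calc ‖x + y‖ ≤ ‖x‖ + ‖y‖ := norm_add_le _ _
          _ ≤ 2 * ‖y‖ := by linarith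
      · linarith [norm_nonneg x]
    have hmaxq : (max ‖x + y‖ ‖y‖) ^ q ≤ 2 ^ q * ‖y‖ ^ q := by
      calc (max ‖x + y‖ ‖y‖) ^ q ≤ (2 * ‖y‖) ^ q :=
            Real.rpow_le_rpow (le_trans (norm_nonneg _) (le_max_right _ _)) hmax (by linarith)
        _ = 2 ^ q * ‖y‖ ^ q := Real.mul_rpow (by norm_num) (norm_nonneg y)
    have hgx : ‖(‖x‖ ^ q) • x‖ ≤ ‖y‖ ^ q * ‖x‖ := by
      rw [norm_smul, Real.norm_eq_abs, abs_of_nonneg (Real.rpow_nonneg (norm_nonneg x) q)]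
      exact mul_le_mul_of_nonneg_right
        (Real.rpow_le_rpow (norm_nonneg x) hxy (by linarith)) (norm_nonneg x)
    have hDle : ‖D‖ ≤ ((q + 1) * 2 ^ q + 1) * (‖x‖ * ‖y‖ ^ q) := by
      have : ‖(‖x + y‖ ^ q) • (x + y) - (‖y‖ ^ q) • y‖
          ≤ (q + 1) * (2 ^ q * ‖y‖ ^ q) * ‖x‖ := by
        refine le_trans h3 ?_
        apply mul_le_mul_of_nonneg_right _ (norm_nonneg x)
        exact mul_le_mul_of_nonneg_left hmaxq (by linarith)
      nlinarith [norm_nonneg x, Real.rpow_nonneg (norm_nonneg y) q]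
    calc |(inner ℝ D y : ℝ)| ≤ ‖D‖ * ‖y‖ := hDy
      _ ≤ (((q + 1) * 2 ^ q + 1) * (‖x‖ * ‖y‖ ^ q)) * ‖y‖ := by
          apply mul_le_mul_of_nonneg_right hDle (norm_nonneg y)
      _ = ((q + 1) * 2 ^ q + 1) * (‖x‖ * ‖y‖ ^ (p - 1)) := by rw [hyq1]; ring
      _ ≤ ((q + 1) * 2 ^ q + 1) * (‖x‖ ^ q * ‖y‖ ^ (2:ℝ) + ‖x‖ * ‖y‖ ^ (p - 1)) :=
          mul_le_mul_of_nonneg_left (le_add_of_nonneg_left hA) hC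
  · -- ‖y‖ ≤ ‖x‖ : use |F| ≤ C ‖x‖^{p-2} ‖y‖^2
    have hsplit : ‖D‖ ≤ ‖(‖x + y‖ ^ q) • (x + y) - (‖x‖ ^ q) • x‖ + ‖(‖y‖ ^ q) • y‖ := by
      rw [hD, show (‖x + y‖ ^ q) • (x + y) - (‖y‖ ^ q) • y - (‖x‖ ^ q) • x
        = ((‖x + y‖ ^ q) • (x + y) - (‖x‖ ^ q) • x) - (‖y‖ ^ q) • y by abel]
      exact norm_sub_le _ _
    have h3 := aux3 hq1.le (x + y) x
    rw [add_sub_cancel_left] at h3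
    have hmax : max ‖x + y‖ ‖x‖ ≤ 2 * ‖x‖ := by
      apply max_le
      · calc ‖x + y‖ ≤ ‖x‖ + ‖y‖ := norm_add_le _ _
          _ ≤ 2 * ‖x‖ := by linarith
      · linarith [norm_nonneg x]
    have hmaxq : (max ‖x + y‖ ‖x‖) ^ q ≤ 2 ^ q * ‖x‖ ^ q := by
      calc (max ‖x + y‖ ‖x‖) ^ q ≤ (2 * ‖x‖) ^ q :=
            Real.rpow_le_rpow (le_trans (norm_nonneg _) (le_max_right _ _)) hmax (by linarith)
        _ = 2 ^ q * ‖x‖ ^ q := Real.mul_rpow (by norm_num) (norm_nonneg x)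
    have hgy : ‖(‖y‖ ^ q) • y‖ ≤ ‖x‖ ^ q * ‖y‖ := by
      rw [norm_smul, Real.norm_eq_abs, abs_of_nonneg (Real.rpow_nonneg (norm_nonneg y) q)]
      exact mul_le_mul_of_nonneg_right
        (Real.rpow_le_rpow (norm_nonneg y) hxy (by linarith)) (norm_nonneg y)
    have hDle : ‖D‖ ≤ ((q + 1) * 2 ^ q + 1) * (‖x‖ ^ q * ‖y‖) := by
      have : ‖(‖x + y‖ ^ q) • (x + y) - (‖x‖ ^ q) • x‖
          ≤ (q + 1) * (2 ^ q * ‖x‖ ^ q) * ‖y‖ := by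
        refine le_trans h3 ?_
        apply mul_le_mul_of_nonneg_right _ (norm_nonneg y)
        exact mul_le_mul_of_nonneg_left hmaxq (by linarith)
      nlinarith [norm_nonneg y, Real.rpow_nonneg (norm_nonneg x) q]
    calc |(inner ℝ D y : ℝ)| ≤ ‖D‖ * ‖y‖ := hDy
      _ ≤ (((q + 1) * 2 ^ q + 1) * (‖x‖ ^ q * ‖y‖)) * ‖y‖ := by
          apply mul_le_mul_of_nonneg_right hDle (norm_nonneg y)
      _ = ((q + 1) * 2 ^ q + 1) * (‖x‖ ^ q * ‖y‖ ^ (2:ℝ)) := by rw [hy2]; ring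
      _ ≤ ((q + 1) * 2 ^ q + 1) * (‖x‖ ^ q * ‖y‖ ^ (2:ℝ) + ‖x‖ * ‖y‖ ^ (p - 1)) :=
          mul_le_mul_of_nonneg_left (le_add_of_nonneg_right hB) hC
end

section
/- Let 2 < q ≤ 3. Then there exists a constant C > 0, depending only on q, such that for all real numbers a, b: | (a+b)|a+b|^{q-2} − a|a|^{q-2} − (q−1)|a|^{q-2} b | ≤ C|b|^{q-1}. -/
open Real Set

lemma my_rpow_subadd {e : ℝ} (he0 : 0 ≤ e) (he1 : e ≤ 1) {x y : ℝ} (hx : 0 ≤ x) (hy : 0 ≤ y) :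
    (x + y) ^ e ≤ x ^ e + y ^ e := by
  have h := NNReal.rpow_add_le_add_rpow (x.toNNReal) (y.toNNReal) he0 he1
  have h2 := NNReal.coe_le_coe.2 h
  push_cast at h2
  simpa [Real.coe_toNNReal x hx, Real.coe_toNNReal y hy] using h2

lemma my_self_mul_rpow {t : ℝ} (ht : 0 ≤ t) {e : ℝ} (he : 0 < e) :
    t * t ^ e = t ^ (e + 1) := by
  rcases eq_or_lt_of_le ht with h | h
  · simp [← h, Real.zero_rpow he.ne', Real.zero_rpow (by linarith : e + 1 ≠ 0)]
  · rw [Real.rpow_add_one h.ne']; ring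

lemma my_lemA {p : ℝ} (hp1 : 1 ≤ p) (hp2 : p ≤ 2) {x b : ℝ} (hx : 0 ≤ x) (hb : 0 ≤ b) :
    (x + b) ^ p ≤ x ^ p + p * x ^ (p - 1) * b + b ^ p := by
  set F : ℝ → ℝ := fun t => x ^ p + p * x ^ (p - 1) * t + t ^ p - (x + t) ^ p with hF
  have hder : ∀ t : ℝ, HasDerivAt F (p * x ^ (p-1) + p * t ^ (p-1) - p * (x + t) ^ (p-1)) t := by
    intro t
    have h1 : HasDerivAt (fun t : ℝ => t ^ p) (1 * p * t ^ (p-1)) t :=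
      (hasDerivAt_id t).rpow_const (Or.inr hp1)
    have h2 : HasDerivAt (fun t : ℝ => (x + t) ^ p) (1 * p * (x + t) ^ (p-1)) t :=
      ((hasDerivAt_id t).const_add x).rpow_const (Or.inr hp1)
    have h3 : HasDerivAt (fun t : ℝ => x ^ p + p * x ^ (p-1) * t) (p * x ^ (p-1)) t := by
      simpa using ((hasDerivAt_id t).const_mul (p * x ^ (p-1))).const_add (x ^ p)
    have h4 := (h3.add h1).sub h2
    exact h4.congr_deriv (by ring)
  have hmono : MonotoneOn F (Ici 0) := by
    apply monotoneOn_of_deriv_nonneg (convex_Ici 0)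
    · exact fun t _ => (hder t).continuousAt.continuousWithinAt
    · exact fun t _ => (hder t).differentiableAt.differentiableWithinAt
    · intro t ht
      rw [interior_Ici] at ht
      rw [(hder t).deriv]
      have hsub : (x + t) ^ (p-1) ≤ x ^ (p-1) + t ^ (p-1) :=
        my_rpow_subadd (by linarith) (by linarith) hx (le_of_lt ht)
      nlinarith
  have h0 : F 0 ≤ F b := hmono self_mem_Ici hb hb
  have hF0 : F 0 = 0 := by
    simp [hF, Real.zero_rpow (by positivity : p ≠ 0)]
  have : (0:ℝ) ≤ F b := hF0 ▸ h0
  simp only [hF] at this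
  linarith

lemma my_lemB {p : ℝ} (hp1 : 1 < p) {x b : ℝ} (hx : 0 ≤ x) (hb : -x ≤ b) :
    x ^ p + p * x ^ (p-1) * b ≤ (x + b) ^ p := by
  rcases eq_or_lt_of_le hx with h0 | h0
  · have hb0 : 0 ≤ b := by rw [← h0] at hb; simpa using hb
    rw [← h0]
    simp [Real.zero_rpow (by positivity : p ≠ 0),
      Real.zero_rpow (by linarith : p - 1 ≠ 0)]
    exact Real.rpow_nonneg hb0 p
  · have hb' : -1 ≤ b / x := by
      rw [le_div_iff₀ h0]; linarith
    have hbern : 1 + p * (b / x) ≤ (1 + b / x) ^ p :=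
      one_add_mul_self_le_rpow_one_add hb' hp1.le
    have hx1 : x + b = x * (1 + b / x) := by field_simp
    have hpow : x ^ (p - 1) = x ^ p / x := by
      rw [Real.rpow_sub h0, Real.rpow_one]
    rw [hx1, Real.mul_rpow h0.le (by nlinarith : (0:ℝ) ≤ 1 + b / x)]
    have := mul_le_mul_of_nonneg_left hbern (Real.rpow_nonneg h0.le p)
    calc x ^ p + p * x ^ (p-1) * b = x ^ p * (1 + p * (b / x)) := by
          rw [hpow]; field_simp
      _ ≤ x ^ p * (1 + b / x) ^ p := this

lemma my_main_nonneg {q : ℝ} (h1 : 2 < q) (h2 : q ≤ 3) {a : ℝ} (ha : 0 ≤ a) (b : ℝ) :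
    |(a + b) * |a + b| ^ (q - 2) - a * |a| ^ (q - 2) - (q - 1) * |a| ^ (q - 2) * b|
      ≤ 4 * |b| ^ (q - 1) := by
  have hq2 : (0:ℝ) < q - 2 := by linarith
  have hp1 : (1:ℝ) < q - 1 := by linarith
  have hpe : q - 2 + 1 = q - 1 := by ring
  have hpm : q - 1 - 1 = q - 2 := by ring
  rcases le_or_gt 0 (a + b) with hab | hab
  · -- a + b ≥ 0
    rw [abs_of_nonneg hab, abs_of_nonneg ha,
      my_self_mul_rpow hab hq2, my_self_mul_rpow ha hq2, hpe]
    have hlow : a ^ (q-1) + (q-1) * a ^ (q-2) * b ≤ (a + b) ^ (q-1) := by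
      have := my_lemB hp1 ha (by linarith : -a ≤ b)
      rwa [hpm] at this
    rcases le_or_gt 0 b with hb | hb
    · -- b ≥ 0
      have hup : (a + b) ^ (q-1) ≤ a ^ (q-1) + (q-1) * a ^ (q-2) * b + b ^ (q-1) := by
        have := my_lemA hp1.le (by linarith) ha hb
        rwa [hpm] at this
      rw [abs_of_nonneg hb]
      rw [abs_le]
      have hbp : (0:ℝ) ≤ b ^ (q-1) := Real.rpow_nonneg hb _
      constructor <;> nlinarith
    · -- b < 0, a + b ≥ 0
      have hnb : (0:ℝ) ≤ -b := by linarith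
      rw [abs_of_neg hb]
      have hup' : (a + b) ^ (q-1) + (q-1) * (a+b) ^ (q-2) * (-b) ≤ a ^ (q-1) := by
        have := my_lemB hp1 hab (by linarith : -(a+b) ≤ -b)
        rwa [hpm, show a + b + -b = a by ring] at this
      have hsub : a ^ (q-2) ≤ (a+b) ^ (q-2) + (-b) ^ (q-2) := by
        have := my_rpow_subadd (by linarith : (0:ℝ) ≤ q-2) (by linarith : q-2 ≤ 1) hab hnb
        rwa [show a + b + -b = a by ring] at this
      have hmul : (-b) * (-b) ^ (q-2) = (-b) ^ (q-1) := by
        rw [my_self_mul_rpow hnb hq2, hpe]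
      have hbp : (0:ℝ) ≤ (-b) ^ (q-1) := Real.rpow_nonneg hnb _
      have habp : (0:ℝ) ≤ (a+b) ^ (q-2) := Real.rpow_nonneg hab _
      rw [abs_le]
      have key1 := mul_le_mul_of_nonneg_left hsub (mul_nonneg (by linarith : (0:ℝ) ≤ q-1) hnb)
      have key2 := mul_le_mul_of_nonneg_right (show q - 1 ≤ 2 by linarith) hbp
      constructor
      · nlinarith [hlow, hbp]
      · nlinarith [key1, key2]
  · -- a + b < 0, so b < 0, a < -b
    have hb : b < 0 := by linarith
    have hnb : (0:ℝ) < -b := by linarith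
    have hle1 : -(a+b) ≤ -b := by linarith
    have hle2 : a ≤ -b := by linarith
    rw [abs_of_neg hab, abs_of_nonneg ha, abs_of_neg hb,
      my_self_mul_rpow ha hq2, hpe]
    have e1 : (a + b) * (-(a+b)) ^ (q-2) = -((-(a+b)) ^ (q-1)) := by
      rw [← hpe, ← my_self_mul_rpow (by linarith : (0:ℝ) ≤ -(a+b)) hq2]; ring
    rw [e1]
    have b1 : (-(a+b)) ^ (q-1) ≤ (-b) ^ (q-1) :=
      Real.rpow_le_rpow (by linarith) hle1 (by linarith)
    have b2 : a ^ (q-1) ≤ (-b) ^ (q-1) :=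
      Real.rpow_le_rpow ha hle2 (by linarith)
    have b3 : a ^ (q-2) ≤ (-b) ^ (q-2) :=
      Real.rpow_le_rpow ha hle2 (by linarith)
    have hmul : (-b) * (-b) ^ (q-2) = (-b) ^ (q-1) := by
      rw [my_self_mul_rpow hnb.le hq2, hpe]
    have hbp : (0:ℝ) ≤ (-b) ^ (q-1) := Real.rpow_nonneg hnb.le _
    have hap : (0:ℝ) ≤ a ^ (q-1) := Real.rpow_nonneg ha _
    have hap2 : (0:ℝ) ≤ a ^ (q-2) := Real.rpow_nonneg ha _
    have habp : (0:ℝ) ≤ (-(a+b)) ^ (q-1) := Real.rpow_nonneg (by linarith) _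
    have h5 : a ^ (q-2) * (-b) ≤ (-b) ^ (q-2) * (-b) := mul_le_mul_of_nonneg_right b3 hnb.le
    have h6 : (0:ℝ) ≤ a ^ (q-2) * (-b) := mul_nonneg hap2 hnb.le
    have h7 : (q - 1) * (a ^ (q-2) * (-b)) ≤ 2 * (a ^ (q-2) * (-b)) :=
      mul_le_mul_of_nonneg_right (by linarith) h6
    rw [abs_le]
    constructor
    · nlinarith [b1, b2, h6, hmul]
    · nlinarith [h5, h7, hmul, b1, b2, hap, habp]

theorem stmt5 (q : ℝ) (h1 : 2 < q) (h2 : q ≤ 3) :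
    ∃ C > (0:ℝ), ∀ a b : ℝ,
      |(a + b) * |a + b| ^ (q - 2) - a * |a| ^ (q - 2) - (q - 1) * |a| ^ (q - 2) * b|
        ≤ C * |b| ^ (q - 1) := by
  refine ⟨4, by norm_num, fun a b => ?_⟩
  rcases le_or_gt 0 a with ha | ha
  · exact my_main_nonneg h1 h2 ha b
  · have h := my_main_nonneg h1 h2 (by linarith : (0:ℝ) ≤ -a) (-b)
    have e : -(a + b) * |a + b| ^ (q - 2) - -a * |a| ^ (q - 2) - (q - 1) * |a| ^ (q - 2) * -b
        = -((a + b) * |a + b| ^ (q - 2) - a * |a| ^ (q - 2) - (q - 1) * |a| ^ (q - 2) * b) := by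
      ring
    rw [show -a + -b = -(a + b) by ring, abs_neg, abs_neg, abs_neg, e, abs_neg] at h
    exact h
end

section
/- Let q > 3. Then there exists a constant C > 0, depending only on q, such that for all real numbers a, b: | (a+b)|a+b|^{q-2} − a|a|^{q-2} − (q−1)|a|^{q-2} b | ≤ C(|b|^{q-1} + |a|^{q-3}b²). -/
open Real Filter Set

lemma aux_mul_self_rpow {x : ℝ} (hx : 0 ≤ x) {p : ℝ} (hp : 0 < p) :
    x * x ^ p = x ^ (p + 1) := by
  rcases eq_or_lt_of_le hx with h | h
  · rw [← h, Real.zero_rpow (by linarith), Real.zero_rpow (by linarith), mul_zero]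
  · rw [Real.rpow_add h, Real.rpow_one]; ring

lemma aux_deriv1 (q : ℝ) (hq : 3 < q) {t : ℝ} (ht : t ≠ 0) :
    HasDerivAt (fun x : ℝ => x * |x| ^ (q - 2)) ((q - 1) * |t| ^ (q - 2)) t := by
  rcases ht.lt_or_gt with h | h
  · -- t < 0 : f x = -((-x)^(q-1)) near t
    have hg : HasDerivAt (fun x : ℝ => -((-x) ^ (q - 1))) ((q - 1) * |t| ^ (q - 2)) t := by
      have h1 : HasDerivAt (fun x : ℝ => (-x) ^ (q - 1))
          ((q - 1) * (-t) ^ (q - 1 - 1) * (-1)) t :=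
        (Real.hasDerivAt_rpow_const (x := -t) (p := q - 1)
          (Or.inl (by linarith))).comp t ((hasDerivAt_id t).neg)
      have := h1.neg
      refine this.congr_deriv ?_
      rw [abs_of_neg h]
      ring_nf
    apply hg.congr_of_eventuallyEq
    filter_upwards [eventually_lt_nhds h] with x hx
    rw [abs_of_neg hx, show x * (-x) ^ (q - 2) = -(-x * (-x) ^ (q - 2)) by ring,
      aux_mul_self_rpow (by linarith) (by linarith), show q - 2 + 1 = q - 1 by ring]
  · have hg : HasDerivAt (fun x : ℝ => x ^ (q - 1)) ((q - 1) * |t| ^ (q - 2)) t := by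
      have h1 := Real.hasDerivAt_rpow_const (x := t) (p := q - 1) (Or.inl (ne_of_gt h))
      convert h1 using 1
      rw [abs_of_pos h, show q - 1 - 1 = q - 2 by ring]
    apply hg.congr_of_eventuallyEq
    filter_upwards [eventually_gt_nhds h] with x hx
    rw [abs_of_pos hx, aux_mul_self_rpow hx.le (by linarith), show q - 2 + 1 = q - 1 by ring]

lemma aux_deriv2 (q : ℝ) (hq : 3 < q) {t : ℝ} (ht : t ≠ 0) :
    ∃ d, HasDerivAt (fun x : ℝ => (q - 1) * |x| ^ (q - 2)) d t ∧
      |d| ≤ (q - 1) * (q - 2) * |t| ^ (q - 3) := by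
  rcases ht.lt_or_gt with h | h
  · refine ⟨(q - 1) * ((q - 2) * (-t) ^ (q - 2 - 1) * (-1)), ?_, ?_⟩
    · have h1 : HasDerivAt (fun x : ℝ => (-x) ^ (q - 2))
          ((q - 2) * (-t) ^ (q - 2 - 1) * (-1)) t :=
        (Real.hasDerivAt_rpow_const (x := -t) (p := q - 2)
          (Or.inl (by linarith))).comp t ((hasDerivAt_id t).neg)
      apply (h1.const_mul ((q:ℝ) - 1)).congr_of_eventuallyEq
      filter_upwards [eventually_lt_nhds h] with x hx
      rw [abs_of_neg hx]
    · rw [abs_of_neg h, show q - 2 - 1 = q - 3 by ring]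
      have hX : (0:ℝ) ≤ (-t) ^ (q-3) := Real.rpow_nonneg (by linarith) _
      have hm : (0:ℝ) ≤ (q-1)*(q-2)*(-t)^(q-3) :=
        mul_nonneg (mul_nonneg (by linarith) (by linarith)) hX
      rw [abs_of_nonpos (by nlinarith)]
      apply le_of_eq; ring
  · refine ⟨(q - 1) * ((q - 2) * t ^ (q - 2 - 1)), ?_, ?_⟩
    · have h1 := Real.hasDerivAt_rpow_const (x := t) (p := q - 2) (Or.inl (ne_of_gt h))
      apply (h1.const_mul ((q:ℝ) - 1)).congr_of_eventuallyEq
      filter_upwards [eventually_gt_nhds h] with x hx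
      rw [abs_of_pos hx]
    · rw [abs_of_pos h, show q - 2 - 1 = q - 3 by ring]
      have hX : (0:ℝ) ≤ t ^ (q-3) := Real.rpow_nonneg h.le _
      rw [abs_of_nonneg (mul_nonneg (by linarith) (mul_nonneg (by linarith) hX))]
      apply le_of_eq; ring

lemma aux_mem_uIcc {b t : ℝ} (ht : t ∈ Set.uIcc (0:ℝ) b) : |t| ≤ |b| := by
  rcases Set.mem_uIcc.mp ht with ⟨h1, h2⟩ | ⟨h1, h2⟩
  · rw [abs_of_nonneg h1, abs_of_nonneg (le_trans h1 h2)]; exact h2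
  · rw [abs_of_nonpos h2, abs_of_nonpos (le_trans h1 h2)]; linarith

theorem stmt6 (q : ℝ) (h1 : 3 < q) :
    ∃ C > (0:ℝ), ∀ a b : ℝ,
      |(a + b) * |a + b| ^ (q - 2) - a * |a| ^ (q - 2) - (q - 1) * |a| ^ (q - 2) * b|
        ≤ C * (|b| ^ (q - 1) + |a| ^ (q - 3) * b ^ 2) := by
  have h3q : (0:ℝ) < (3:ℝ) ^ q := Real.rpow_pos_of_pos (by norm_num) q
  refine ⟨(q + 2) ^ 2 * 3 ^ q, by positivity, fun a b => ?_⟩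
  have hq1 : (0:ℝ) < q - 1 := by linarith
  have hbq : (0:ℝ) ≤ |b| ^ (q - 1) := Real.rpow_nonneg (abs_nonneg b) _
  have haq3 : (0:ℝ) ≤ |a| ^ (q - 3) := Real.rpow_nonneg (abs_nonneg a) _
  rcases le_or_gt |a| (2 * |b|) with hcase | hcase
  · -- |a| ≤ 2|b| : crude bound
    have hb0 : (0:ℝ) ≤ |b| := abs_nonneg b
    have e1 : |(a + b) * |a + b| ^ (q - 2)| = |a + b| ^ (q - 1) := by
      rw [abs_mul, abs_of_nonneg (Real.rpow_nonneg (abs_nonneg _) _),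
        aux_mul_self_rpow (abs_nonneg _) (by linarith), show q - 2 + 1 = q - 1 by ring]
    have e2 : |a * |a| ^ (q - 2)| = |a| ^ (q - 1) := by
      rw [abs_mul, abs_of_nonneg (Real.rpow_nonneg (abs_nonneg _) _),
        aux_mul_self_rpow (abs_nonneg _) (by linarith), show q - 2 + 1 = q - 1 by ring]
    have b1 : |a + b| ^ (q - 1) ≤ 3 ^ q * |b| ^ (q - 1) := by
      calc |a + b| ^ (q - 1) ≤ (3 * |b|) ^ (q - 1) := by
            apply Real.rpow_le_rpow (abs_nonneg _) _ (by linarith)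
            calc |a + b| ≤ |a| + |b| := abs_add_le _ _
              _ ≤ 3 * |b| := by linarith
        _ = 3 ^ (q - 1) * |b| ^ (q - 1) := Real.mul_rpow (by norm_num) hb0
        _ ≤ 3 ^ q * |b| ^ (q - 1) :=
            mul_le_mul_of_nonneg_right
              (Real.rpow_le_rpow_of_exponent_le (by norm_num) (by linarith)) hbq
    have b2 : |a| ^ (q - 1) ≤ 3 ^ q * |b| ^ (q - 1) := by
      calc |a| ^ (q - 1) ≤ (3 * |b|) ^ (q - 1) := by
            apply Real.rpow_le_rpow (abs_nonneg _) (by linarith) (by linarith)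
        _ = 3 ^ (q - 1) * |b| ^ (q - 1) := Real.mul_rpow (by norm_num) hb0
        _ ≤ 3 ^ q * |b| ^ (q - 1) :=
            mul_le_mul_of_nonneg_right
              (Real.rpow_le_rpow_of_exponent_le (by norm_num) (by linarith)) hbq
    have b3 : |(q - 1) * |a| ^ (q - 2) * b| ≤ (q - 1) * (3 ^ q * |b| ^ (q - 1)) := by
      rw [abs_mul, abs_mul, abs_of_pos hq1, abs_of_nonneg (Real.rpow_nonneg (abs_nonneg _) _), mul_assoc]
      apply mul_le_mul_of_nonneg_left _ (le_of_lt hq1)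
      calc |a| ^ (q - 2) * |b| ≤ (3 * |b|) ^ (q - 2) * |b| := by
            apply mul_le_mul_of_nonneg_right _ hb0
            apply Real.rpow_le_rpow (abs_nonneg _) (by linarith) (by linarith)
        _ = 3 ^ (q - 2) * (|b| ^ (q - 2) * |b|) := by
            rw [Real.mul_rpow (by norm_num) hb0]; ring
        _ = 3 ^ (q - 2) * |b| ^ (q - 1) := by
            rw [mul_comm (|b| ^ (q - 2)) |b|, aux_mul_self_rpow hb0 (by linarith),
              show q - 2 + 1 = q - 1 by ring]
        _ ≤ 3 ^ q * |b| ^ (q - 1) :=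
            mul_le_mul_of_nonneg_right
              (Real.rpow_le_rpow_of_exponent_le (by norm_num) (by linarith)) hbq
    calc |(a + b) * |a + b| ^ (q - 2) - a * |a| ^ (q - 2) - (q - 1) * |a| ^ (q - 2) * b|
        ≤ |(a + b) * |a + b| ^ (q - 2)| + |a * |a| ^ (q - 2)| + |(q - 1) * |a| ^ (q - 2) * b| := by
          exact (abs_sub _ _).trans (by gcongr; exact abs_sub _ _)
      _ ≤ 3 ^ q * |b| ^ (q - 1) + 3 ^ q * |b| ^ (q - 1) + (q - 1) * (3 ^ q * |b| ^ (q - 1)) := by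
          rw [e1, e2]; gcongr
      _ = (q + 1) * 3 ^ q * |b| ^ (q - 1) := by ring
      _ ≤ (q + 2) ^ 2 * 3 ^ q * (|b| ^ (q - 1) + |a| ^ (q - 3) * b ^ 2) := by
          have : (q + 1) * (3 ^ q * |b| ^ (q - 1)) ≤ (q + 2) ^ 2 * (3 ^ q * |b| ^ (q - 1)) := by
            gcongr; nlinarith
          nlinarith [mul_nonneg (mul_nonneg (sq_nonneg (q + 2)) h3q.le)
            (mul_nonneg haq3 (sq_nonneg b))]
  · -- 2|b| < |a|
    have hb0 : (0:ℝ) ≤ |b| := abs_nonneg b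
    have ha0 : 0 < |a| := by linarith
    set s : Set ℝ := Set.uIcc (0:ℝ) b with hs
    have hconv : Convex ℝ s := convex_uIcc 0 b
    have h0s : (0:ℝ) ∈ s := Set.left_mem_uIcc
    have hbs : b ∈ s := Set.right_mem_uIcc
    have hbound : ∀ t ∈ s, |a| / 2 ≤ |a + t| ∧ |a + t| ≤ 3 / 2 * |a| := by
      intro t ht
      have htb := aux_mem_uIcc ht
      constructor
      · have h' : |a| ≤ |a + t| + |t| := by
          calc |a| = |(a + t) + (-t)| := by ring_nf
            _ ≤ |a + t| + |(-t)| := abs_add_le _ _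
            _ = |a + t| + |t| := by rw [abs_neg]
        linarith
      · calc |a + t| ≤ |a| + |t| := abs_add_le _ _
          _ ≤ 3 / 2 * |a| := by linarith
    have hne : ∀ t ∈ s, a + t ≠ 0 := by
      intro t ht h
      have := (hbound t ht).1
      rw [h, abs_zero] at this
      linarith
    set M : ℝ := (q - 1) * (q - 2) * (3 / 2 * |a|) ^ (q - 3) with hM
    have hM0 : 0 ≤ M := by
      have : (0:ℝ) ≤ (3 / 2 * |a|) ^ (q - 3) := Real.rpow_nonneg (by positivity) _
      have h12 : (0:ℝ) ≤ (q - 1) * (q - 2) := by nlinarith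
      rw [hM]; exact mul_nonneg h12 this
    set ψ : ℝ → ℝ := fun x => (q - 1) * |a + x| ^ (q - 2) with hψ
    have hψd : ∀ t ∈ s, HasDerivAt ψ (deriv ψ t) t ∧ |deriv ψ t| ≤ M := by
      intro t ht
      obtain ⟨d, hd, hdb⟩ := aux_deriv2 q h1 (hne t ht)
      have hcomp : HasDerivAt ψ (d * 1) t := by
        have := HasDerivAt.comp (x := t) hd ((hasDerivAt_id t).const_add a)
        exact this
      rw [mul_one] at hcomp
      refine ⟨hcomp.deriv ▸ hcomp, ?_⟩
      rw [hcomp.deriv]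
      refine hdb.trans ?_
      rw [hM]
      have h12 : (0:ℝ) ≤ (q - 1) * (q - 2) := by nlinarith
      exact mul_le_mul_of_nonneg_left
        (Real.rpow_le_rpow (abs_nonneg _) (hbound t ht).2 (by linarith)) h12
    have hψlip : ∀ t ∈ s, |ψ t - ψ 0| ≤ M * |b| := by
      intro t ht
      have h' := hconv.norm_image_sub_le_of_norm_hasDerivWithin_le
        (f' := deriv ψ) (fun x hx => ((hψd x hx).1).hasDerivWithinAt)
        (fun x hx => by rw [Real.norm_eq_abs]; exact (hψd x hx).2) h0s ht
      rw [Real.norm_eq_abs, Real.norm_eq_abs, sub_zero] at h'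
      exact h'.trans (mul_le_mul_of_nonneg_left (aux_mem_uIcc ht) hM0)
    set φ : ℝ → ℝ := fun x =>
      (a + x) * |a + x| ^ (q - 2) - (a * |a| ^ (q - 2) + (q - 1) * |a| ^ (q - 2) * x) with hφ
    have hψ0 : ψ 0 = (q - 1) * |a| ^ (q - 2) := by simp [hψ]
    have hφd : ∀ t ∈ s, HasDerivWithinAt φ (ψ t - ψ 0) s t := by
      intro t ht
      have hd1 : HasDerivAt (fun x : ℝ => (a + x) * |a + x| ^ (q - 2))
          ((q - 1) * |a + t| ^ (q - 2)) t := by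
        have := HasDerivAt.comp (x := t) (aux_deriv1 q h1 (hne t ht))
          ((hasDerivAt_id t).const_add a)
        rw [mul_one] at this
        exact this
      have hd2 : HasDerivAt (fun x : ℝ => a * |a| ^ (q - 2) + (q - 1) * |a| ^ (q - 2) * x)
          ((q - 1) * |a| ^ (q - 2)) t := by
        simpa using ((hasDerivAt_id t).const_mul ((q - 1) * |a| ^ (q - 2))).const_add
          (a * |a| ^ (q - 2))
      have := (hd1.sub hd2).hasDerivWithinAt (s := s)
      rw [hψ0]
      exact this
    have hφ0 : φ 0 = 0 := by simp [hφ]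
    have hfinal := hconv.norm_image_sub_le_of_norm_hasDerivWithin_le
      (f' := fun t => ψ t - ψ 0) hφd
      (fun t ht => by rw [Real.norm_eq_abs]; exact hψlip t ht) h0s hbs
    rw [Real.norm_eq_abs, Real.norm_eq_abs, hφ0, sub_zero, sub_zero] at hfinal
    have key : M ≤ (q + 2) ^ 2 * 3 ^ q * |a| ^ (q - 3) := by
      rw [hM, Real.mul_rpow (by norm_num) (abs_nonneg a)]
      have e1 : ((3:ℝ) / 2) ^ (q - 3) ≤ 3 ^ q := by
        calc ((3:ℝ) / 2) ^ (q - 3) ≤ (3:ℝ) ^ (q - 3) :=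
              Real.rpow_le_rpow (by norm_num) (by norm_num) (by linarith)
          _ ≤ (3:ℝ) ^ q := Real.rpow_le_rpow_of_exponent_le (by norm_num) (by linarith)
      have e2 : (q - 1) * (q - 2) ≤ (q + 2) ^ 2 := by nlinarith
      calc (q - 1) * (q - 2) * ((3 / 2) ^ (q - 3) * |a| ^ (q - 3))
          ≤ (q + 2) ^ 2 * (3 ^ q * |a| ^ (q - 3)) := by
            apply mul_le_mul e2 (mul_le_mul_of_nonneg_right e1 haq3) ?_ (by positivity)
            exact mul_nonneg (Real.rpow_nonneg (by norm_num) _) haq3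
        _ = (q + 2) ^ 2 * 3 ^ q * |a| ^ (q - 3) := by ring
    calc |(a + b) * |a + b| ^ (q - 2) - a * |a| ^ (q - 2) - (q - 1) * |a| ^ (q - 2) * b|
        = |φ b| := by rw [hφ]; congr 1; ring
      _ ≤ M * |b| * |b| := hfinal
      _ = M * b ^ 2 := by rw [mul_assoc, abs_mul_abs_self]; ring
      _ ≤ (q + 2) ^ 2 * 3 ^ q * |a| ^ (q - 3) * b ^ 2 :=
          mul_le_mul_of_nonneg_right key (sq_nonneg b)
      _ ≤ (q + 2) ^ 2 * 3 ^ q * (|b| ^ (q - 1) + |a| ^ (q - 3) * b ^ 2) := by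
          nlinarith [mul_nonneg (mul_nonneg (sq_nonneg (q + 2)) h3q.le) hbq]
end

section
/- Let n ≥ 2, 1 < p < n, 0 ≤ a < (n−p)/p, a ≤ b < a+1, q = np/(n − p(1+a−b)), and γ = 1+a−b. Define v(x) = A(1 + B|x|^{pγ(n−p−pa)/((p−1)(n−pγ))})^{1 − n/(pγ)} for constants A ∈ ℝ and B > 0. Then ∫_{ℝⁿ} |x|^{−pa} |∇v(x)|^p dx < ∞ and ∫_{ℝⁿ} |x|^{−qb} |v(x)|^q dx < ∞. -/
open MeasureTheory Set Real
open scoped ENNReal NNReal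

lemma aux_pow {B α z : ℝ} (hB : 0 < B) (hα : 0 ≤ α) (hz : z ≤ 0) {r : ℝ} (hr : 0 ≤ r) :
    (1 + B * r ^ α) ^ z ≤ (min 1 B * 2⁻¹ ^ α) ^ z * (1 + r) ^ (α * z) := by
  have hc : (0:ℝ) < min 1 B * 2⁻¹ ^ α := by positivity
  have hmin0 : (0:ℝ) ≤ min 1 B := le_min zero_le_one hB.le
  have h1 : min 1 B * 2⁻¹ ^ α * (1 + r) ^ α ≤ 1 + B * r ^ α := by
    have h2 : ((1 + r) / 2) ^ α ≤ max 1 (r ^ α) := by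
      rcases le_total r 1 with h | h
      · calc ((1 + r) / 2) ^ α ≤ 1 ^ α :=
              Real.rpow_le_rpow (by linarith) (by linarith) hα
          _ = 1 := Real.one_rpow α
          _ ≤ max 1 (r ^ α) := le_max_left _ _
      · calc ((1 + r) / 2) ^ α ≤ r ^ α :=
              Real.rpow_le_rpow (by linarith) (by linarith) hα
          _ ≤ max 1 (r ^ α) := le_max_right _ _
    have h3 : min 1 B * max 1 (r ^ α) ≤ 1 + B * r ^ α := by
      have hra : (0:ℝ) ≤ r ^ α := Real.rpow_nonneg hr α
      rcases max_cases 1 (r ^ α) with ⟨he, _⟩ | ⟨he, _⟩ <;> rw [he]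
      · have := min_le_left 1 B
        nlinarith
      · calc min 1 B * r ^ α ≤ B * r ^ α :=
            mul_le_mul_of_nonneg_right (min_le_right _ _) hra
          _ ≤ 1 + B * r ^ α := by linarith
    calc min 1 B * 2⁻¹ ^ α * (1 + r) ^ α
        = min 1 B * ((1 + r) / 2) ^ α := by
          rw [Real.div_rpow (by linarith) (by norm_num),
            Real.inv_rpow (by norm_num : (0:ℝ) ≤ 2)]
          ring
      _ ≤ min 1 B * max 1 (r ^ α) := mul_le_mul_of_nonneg_left h2 hmin0
      _ ≤ 1 + B * r ^ α := h3
  calc (1 + B * r ^ α) ^ z ≤ (min 1 B * 2⁻¹ ^ α * (1 + r) ^ α) ^ z :=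
        Real.rpow_le_rpow_of_nonpos (by positivity) h1 hz
    _ = (min 1 B * 2⁻¹ ^ α) ^ z * (1 + r) ^ (α * z) := by
        rw [Real.mul_rpow hc.le (Real.rpow_nonneg (by linarith) α),
          ← Real.rpow_mul (by linarith : (0:ℝ) ≤ 1 + r)]

lemma aux_ball {n : ℕ} {s : ℝ} (hs : -(n:ℝ) < s) :
    ∫⁻ x : EuclideanSpace ℝ (Fin n) in Metric.ball 0 1, ENNReal.ofReal (‖x‖ ^ s) < ⊤ := by
  rcases le_or_gt 0 s with h0 | h0
  · calc ∫⁻ x : EuclideanSpace ℝ (Fin n) in Metric.ball 0 1, ENNReal.ofReal (‖x‖ ^ s)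
        ≤ ∫⁻ _ : EuclideanSpace ℝ (Fin n) in Metric.ball 0 1, 1 := by
          refine setLIntegral_mono' measurableSet_ball fun x hx => ?_
          refine le_trans (ENNReal.ofReal_le_ofReal
            (Real.rpow_le_one (norm_nonneg x) (by rw [Metric.mem_ball, dist_zero_right] at hx; exact hx.le) h0))
            (by simp)
      _ < ⊤ := by
          rw [setLIntegral_one]
          exact measure_ball_lt_top
  · have hmeas : Measurable fun x : EuclideanSpace ℝ (Fin n) => ‖x‖ ^ s := by fun_prop
    rw [lintegral_eq_lintegral_meas_le _
      (Filter.Eventually.of_forall fun x => Real.rpow_nonneg (norm_nonneg x) s) hmeas.aemeasurable]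
    have hsub : ∀ t : ℝ, 0 < t →
        {a : EuclideanSpace ℝ (Fin n) | t ≤ ‖a‖ ^ s} ⊆ Metric.closedBall 0 (t ^ s⁻¹) := by
      intro t ht a ha
      simp only [mem_setOf_eq] at ha
      have h0a : 0 < ‖a‖ := by
        rcases eq_or_lt_of_le (norm_nonneg a) with h | h
        · exfalso
          rw [← h, Real.zero_rpow (ne_of_lt h0)] at ha
          linarith
        · exact h
      rw [Metric.mem_closedBall, dist_zero_right]
      exact (Real.le_rpow_inv_iff_of_neg h0a ht h0).2 ha
    calc ∫⁻ t in Ioi (0:ℝ),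
          (volume.restrict (Metric.ball (0 : EuclideanSpace ℝ (Fin n)) 1))
            {a | t ≤ ‖a‖ ^ s}
        ≤ ∫⁻ t in Ioc (0:ℝ) 1 ∪ Ioi 1,
          (volume.restrict (Metric.ball (0 : EuclideanSpace ℝ (Fin n)) 1))
            {a | t ≤ ‖a‖ ^ s} := lintegral_mono_set Ioi_subset_Ioc_union_Ioi
      _ ≤ (∫⁻ t in Ioc (0:ℝ) 1, (volume.restrict (Metric.ball (0 : EuclideanSpace ℝ (Fin n)) 1))
            {a | t ≤ ‖a‖ ^ s})
          + ∫⁻ t in Ioi (1:ℝ), (volume.restrict (Metric.ball (0 : EuclideanSpace ℝ (Fin n)) 1))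
            {a | t ≤ ‖a‖ ^ s} := lintegral_union_le _ _ _
      _ < ⊤ := by
          refine ENNReal.add_lt_top.2 ⟨?_, ?_⟩
          · calc (∫⁻ t in Ioc (0:ℝ) 1, (volume.restrict
                  (Metric.ball (0 : EuclideanSpace ℝ (Fin n)) 1)) {a | t ≤ ‖a‖ ^ s})
                ≤ ∫⁻ _ in Ioc (0:ℝ) 1, volume (Metric.ball (0 : EuclideanSpace ℝ (Fin n)) 1) := by
                  refine setLIntegral_mono' measurableSet_Ioc fun t _ => ?_
                  calc (volume.restrict (Metric.ball (0 : EuclideanSpace ℝ (Fin n)) 1))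
                        {a | t ≤ ‖a‖ ^ s}
                      ≤ (volume.restrict (Metric.ball (0 : EuclideanSpace ℝ (Fin n)) 1)) univ :=
                        measure_mono (subset_univ _)
                    _ = volume (Metric.ball (0 : EuclideanSpace ℝ (Fin n)) 1) := by
                        rw [Measure.restrict_apply_univ]
              _ < ⊤ := by
                  rw [setLIntegral_const]
                  exact ENNReal.mul_lt_top measure_ball_lt_top (by simp)
          · calc (∫⁻ t in Ioi (1:ℝ), (volume.restrict
                  (Metric.ball (0 : EuclideanSpace ℝ (Fin n)) 1)) {a | t ≤ ‖a‖ ^ s})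
                ≤ ∫⁻ t in Ioi (1:ℝ), ENNReal.ofReal (t ^ (s⁻¹ * n)) *
                    volume (Metric.ball (0 : EuclideanSpace ℝ (Fin n)) 1) := by
                  refine setLIntegral_mono' measurableSet_Ioi fun t ht => ?_
                  have ht0 : (0:ℝ) < t := lt_trans one_pos ht
                  calc (volume.restrict (Metric.ball (0 : EuclideanSpace ℝ (Fin n)) 1))
                        {a | t ≤ ‖a‖ ^ s}
                      ≤ (volume.restrict (Metric.ball (0 : EuclideanSpace ℝ (Fin n)) 1))
                          (Metric.closedBall 0 (t ^ s⁻¹)) := measure_mono (hsub t ht0)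
                    _ ≤ volume (Metric.closedBall (0 : EuclideanSpace ℝ (Fin n)) (t ^ s⁻¹)) :=
                        Measure.restrict_apply_le _ _
                    _ = ENNReal.ofReal ((t ^ s⁻¹) ^
                          (Module.finrank ℝ (EuclideanSpace ℝ (Fin n)))) *
                          volume (Metric.ball (0 : EuclideanSpace ℝ (Fin n)) 1) :=
                        Measure.addHaar_closedBall _ _ (Real.rpow_nonneg ht0.le _)
                    _ = ENNReal.ofReal (t ^ (s⁻¹ * n)) *
                          volume (Metric.ball (0 : EuclideanSpace ℝ (Fin n)) 1) := by
                        rw [← Real.rpow_natCast (t ^ s⁻¹) _, ← Real.rpow_mul ht0.le,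
                          finrank_euclideanSpace_fin]
              _ < ⊤ := by
                  rw [lintegral_mul_const' _ _ measure_ball_lt_top.ne]
                  refine ENNReal.mul_lt_top ?_ measure_ball_lt_top
                  refine IntegrableOn.setLIntegral_lt_top ?_
                  refine integrableOn_Ioi_rpow_of_lt ?_ one_pos
                  rw [inv_mul_eq_div, div_lt_iff_of_neg h0]
                  linarith

lemma aux_template {n : ℕ} (hn : 1 ≤ n) {C s B α z : ℝ} (hC : 0 ≤ C) (hB : 0 < B)
    (hα : 0 < α) (hz : z ≤ 0) (hs : -(n:ℝ) < s) (hst : s + α * z < -(n:ℝ))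
    {f : EuclideanSpace ℝ (Fin n) → ℝ}
    (hf : ∀ x : EuclideanSpace ℝ (Fin n), x ≠ 0 →
      f x ≤ C * (‖x‖ ^ s * (1 + B * ‖x‖ ^ α) ^ z)) :
    (∫⁻ x : EuclideanSpace ℝ (Fin n), ENNReal.ofReal (f x)) < ⊤ := by
  have hn0 : (0:ℝ) < n := by exact_mod_cast hn
  set t := α * z with htdef
  have ht : t ≤ 0 := by nlinarith
  set C' := C * (min 1 B * 2⁻¹ ^ α) ^ z with hC'def
  have hC'0 : 0 ≤ C' := by positivity
  have hg : ∀ x : EuclideanSpace ℝ (Fin n), x ≠ 0 →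
      f x ≤ C' * (‖x‖ ^ s * (1 + ‖x‖) ^ t) := by
    intro x hx
    refine le_trans (hf x hx) ?_
    calc C * (‖x‖ ^ s * (1 + B * ‖x‖ ^ α) ^ z)
        ≤ C * (‖x‖ ^ s * ((min 1 B * 2⁻¹ ^ α) ^ z * (1 + ‖x‖) ^ t)) := by
          exact mul_le_mul_of_nonneg_left (mul_le_mul_of_nonneg_left
            (aux_pow hB hα.le hz (norm_nonneg x))
            (Real.rpow_nonneg (norm_nonneg x) s)) hC
      _ = C' * (‖x‖ ^ s * (1 + ‖x‖) ^ t) := by rw [hC'def]; ring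
  haveI : Nonempty (Fin n) := ⟨⟨0, hn⟩⟩
  haveI : Nontrivial (EuclideanSpace ℝ (Fin n)) := by infer_instance
  have hae : ∀ᵐ x : EuclideanSpace ℝ (Fin n), x ≠ 0 := by
    rw [ae_iff]
    simp only [not_not, setOf_eq_eq_singleton]
    exact measure_singleton 0
  have hmono : (∫⁻ x : EuclideanSpace ℝ (Fin n), ENNReal.ofReal (f x))
      ≤ ∫⁻ x : EuclideanSpace ℝ (Fin n),
          ENNReal.ofReal (C' * (‖x‖ ^ s * (1 + ‖x‖) ^ t)) :=
    lintegral_mono_ae (hae.mono fun x hx => ENNReal.ofReal_le_ofReal (hg x hx))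
  refine lt_of_le_of_lt hmono ?_
  rw [← lintegral_add_compl
    (fun x : EuclideanSpace ℝ (Fin n) => ENNReal.ofReal (C' * (‖x‖ ^ s * (1 + ‖x‖) ^ t)))
    (measurableSet_ball (x := (0 : EuclideanSpace ℝ (Fin n))) (ε := 1))]
  refine ENNReal.add_lt_top.2 ⟨?_, ?_⟩
  · -- ball part
    set s' := min s 0 with hs'def
    have hs' : -(n:ℝ) < s' := lt_min hs (by linarith)
    calc (∫⁻ x : EuclideanSpace ℝ (Fin n) in Metric.ball 0 1,
          ENNReal.ofReal (C' * (‖x‖ ^ s * (1 + ‖x‖) ^ t)))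
        ≤ ∫⁻ x : EuclideanSpace ℝ (Fin n) in Metric.ball 0 1,
            ENNReal.ofReal C' * ENNReal.ofReal (‖x‖ ^ s') := by
          refine lintegral_mono_ae ?_
          filter_upwards [hae.filter_mono (ae_mono Measure.restrict_le_self),
            ae_restrict_mem measurableSet_ball] with x hx hxb
          rw [Metric.mem_ball, dist_zero_right] at hxb
          rw [← ENNReal.ofReal_mul hC'0]
          refine ENNReal.ofReal_le_ofReal (mul_le_mul_of_nonneg_left ?_ hC'0)
          calc ‖x‖ ^ s * (1 + ‖x‖) ^ t ≤ ‖x‖ ^ s' * 1 := by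
                refine mul_le_mul ?_ ?_ (Real.rpow_nonneg (by positivity) t) ?_
                · exact Real.rpow_le_rpow_of_exponent_ge (norm_pos_iff.2 hx) hxb.le
                    (min_le_left s 0)
                · exact Real.rpow_le_one_of_one_le_of_nonpos (by linarith [norm_nonneg x]) ht
                · exact Real.rpow_nonneg (norm_nonneg x) s'
            _ = ‖x‖ ^ s' := mul_one _
      _ = ENNReal.ofReal C' * ∫⁻ x : EuclideanSpace ℝ (Fin n) in Metric.ball 0 1,
            ENNReal.ofReal (‖x‖ ^ s') := lintegral_const_mul' _ _ ENNReal.ofReal_ne_top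
      _ < ⊤ := ENNReal.mul_lt_top ENNReal.ofReal_lt_top (aux_ball hs')
  · -- complement part
    set M := max 1 ((2:ℝ) ^ (-s)) with hMdef
    have hM1 : (1:ℝ) ≤ M := le_max_left _ _
    have hM0 : (0:ℝ) ≤ M := by linarith
    have hbd : ∀ x : EuclideanSpace ℝ (Fin n), 1 ≤ ‖x‖ →
        C' * (‖x‖ ^ s * (1 + ‖x‖) ^ t) ≤ C' * M * (1 + ‖x‖) ^ (s + t) := by
      intro x hx1
      have hr0 : (0:ℝ) < ‖x‖ := lt_of_lt_of_le one_pos hx1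
      have h1r : (0:ℝ) < 1 + ‖x‖ := by linarith
      have hxx : ‖x‖ ^ s ≤ M * (1 + ‖x‖) ^ s := by
        rcases le_or_gt 0 s with hs0 | hs0
        · calc ‖x‖ ^ s ≤ (1 + ‖x‖) ^ s :=
                Real.rpow_le_rpow (norm_nonneg x) (by linarith) hs0
            _ ≤ M * (1 + ‖x‖) ^ s :=
                le_mul_of_one_le_left (Real.rpow_nonneg h1r.le s) hM1
        · calc ‖x‖ ^ s ≤ ((1 + ‖x‖) / 2) ^ s :=
                Real.rpow_le_rpow_of_nonpos (by linarith) (by linarith) hs0.le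
            _ = (1 + ‖x‖) ^ s * (2:ℝ) ^ (-s) := by
                rw [Real.div_rpow h1r.le (by norm_num), Real.rpow_neg (by norm_num)]
                ring
            _ ≤ M * (1 + ‖x‖) ^ s := by
                rw [mul_comm]
                exact mul_le_mul_of_nonneg_right (le_max_right _ _)
                  (Real.rpow_nonneg h1r.le s)
      calc C' * (‖x‖ ^ s * (1 + ‖x‖) ^ t)
          ≤ C' * (M * (1 + ‖x‖) ^ s * (1 + ‖x‖) ^ t) := by
            refine mul_le_mul_of_nonneg_left
              (mul_le_mul_of_nonneg_right hxx (Real.rpow_nonneg h1r.le t)) hC'0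
        _ = C' * M * (1 + ‖x‖) ^ (s + t) := by
            rw [Real.rpow_add h1r]
            ring
    calc (∫⁻ x : EuclideanSpace ℝ (Fin n) in (Metric.ball 0 1)ᶜ,
          ENNReal.ofReal (C' * (‖x‖ ^ s * (1 + ‖x‖) ^ t)))
        ≤ ∫⁻ x : EuclideanSpace ℝ (Fin n) in (Metric.ball 0 1)ᶜ,
            ENNReal.ofReal (C' * M) * ENNReal.ofReal ((1 + ‖x‖) ^ (s + t)) := by
          refine lintegral_mono_ae ?_
          filter_upwards [ae_restrict_mem measurableSet_ball.compl] with x hxb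
          rw [mem_compl_iff, Metric.mem_ball, dist_zero_right, not_lt] at hxb
          rw [← ENNReal.ofReal_mul (by positivity)]
          exact ENNReal.ofReal_le_ofReal (hbd x hxb)
      _ ≤ ∫⁻ x : EuclideanSpace ℝ (Fin n),
            ENNReal.ofReal (C' * M) * ENNReal.ofReal ((1 + ‖x‖) ^ (s + t)) :=
          setLIntegral_le_lintegral _ _
      _ = ENNReal.ofReal (C' * M) * ∫⁻ x : EuclideanSpace ℝ (Fin n),
            ENNReal.ofReal ((1 + ‖x‖) ^ (s + t)) :=
          lintegral_const_mul' _ _ ENNReal.ofReal_ne_top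
      _ < ⊤ := by
          refine ENNReal.mul_lt_top ENNReal.ofReal_lt_top ?_
          have : s + t = -(-(s + t)) := by ring
          rw [this]
          refine finite_integral_one_add_norm ?_
          rw [finrank_euclideanSpace_fin]
          linarith

set_option maxHeartbeats 1000000 in
theorem stmt14 (n : ℕ) (p a b : ℝ) (hn : 2 ≤ n) (hp1 : 1 < p) (hpn : p < n)
    (ha0 : 0 ≤ a) (ha : a < ((n : ℝ) - p) / p) (hab : a ≤ b) (hb : b < a + 1)
    (q γ : ℝ) (hq : q = (n : ℝ) * p / ((n : ℝ) - p * (1 + a - b))) (hγ : γ = 1 + a - b)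
    (A B : ℝ) (hB : 0 < B)
    (v : EuclideanSpace ℝ (Fin n) → ℝ)
    (hv : ∀ x, v x =
      A * (1 + B * ‖x‖ ^ (p * γ * ((n : ℝ) - p - p * a) / ((p - 1) * ((n : ℝ) - p * γ))))
        ^ (1 - (n : ℝ) / (p * γ))) :
    (∫⁻ x : EuclideanSpace ℝ (Fin n),
        ENNReal.ofReal (‖x‖ ^ (-(p * a)) * ‖fderiv ℝ v x‖ ^ p)) < ⊤ ∧
    (∫⁻ x : EuclideanSpace ℝ (Fin n),
        ENNReal.ofReal (‖x‖ ^ (-(q * b)) * |v x| ^ q)) < ⊤ := by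
  have hn1 : 1 ≤ n := le_trans one_le_two hn
  have hn0 : (0:ℝ) < n := by exact_mod_cast hn1
  have hp0 : (0:ℝ) < p := lt_trans one_pos hp1
  have hp1' : (0:ℝ) < p - 1 := by linarith
  have hγ0 : 0 < γ := by rw [hγ]; linarith
  have hγ1 : γ ≤ 1 := by rw [hγ]; linarith
  have hpγ : 0 < p * γ := mul_pos hp0 hγ0
  have hpγn : p * γ < n := by nlinarith
  have hnpγ : 0 < (n:ℝ) - p * γ := by linarith
  have hD : 0 < (n:ℝ) - p - p * a := by
    rw [lt_div_iff₀ hp0] at ha; nlinarith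
  set α := p * γ * ((n : ℝ) - p - p * a) / ((p - 1) * ((n : ℝ) - p * γ)) with hαdef
  set β := 1 - (n : ℝ) / (p * γ) with hβdef
  have hα0 : 0 < α := div_pos (mul_pos hpγ hD) (mul_pos hp1' hnpγ)
  have hβ0 : β < 0 := by
    rw [hβdef]
    have : 1 < (n:ℝ) / (p * γ) := (one_lt_div hpγ).2 hpγn
    linarith
  have hαβ : α * β = -(((n:ℝ) - p - p * a) / (p - 1)) := by
    rw [hαdef, hβdef]
    have h1 : p - 1 ≠ 0 := ne_of_gt hp1'
    have h2 : (n:ℝ) - p * γ ≠ 0 := ne_of_gt hnpγ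
    have h3 : p * γ ≠ 0 := ne_of_gt hpγ
    field_simp
    ring
  have hden : (n:ℝ) - p * (1 + a - b) = (n:ℝ) - p * γ := by rw [hγ]
  have hq0 : 0 < q := by
    rw [hq, hden]
    exact div_pos (mul_pos hn0 hp0) hnpγ
  have hqd : q * ((n:ℝ) - p * γ) = (n:ℝ) * p := by
    rw [hq, hden]
    field_simp
  have h5 : p * γ = p + p * a - p * b := by rw [hγ]; ring
  have hv' : v = fun x => A * (1 + B * ‖x‖ ^ α) ^ β := funext hv
  subst hv'
  constructor
  · -- gradient integral
    refine aux_template (C := (|A| * |β| * B * α) ^ p) (s := -(p * a) + (α - 1) * p)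
      (B := B) (α := α) (z := (β - 1) * p) hn1 (by positivity) hB hα0 ?_ ?_ ?_ ?_
    · nlinarith
    · nlinarith [mul_pos hα0 hp0]
    · have e4 : -(p * a) + (α - 1) * p + α * ((β - 1) * p) = α * β * p - p - p * a := by
        ring
      rw [e4, hαβ]
      have hDp : (n:ℝ) - p - p * a < ((n:ℝ) - p - p * a) * p / (p - 1) := by
        rw [lt_div_iff₀ hp1']
        nlinarith
      have e6 : -(((n:ℝ) - p - p * a) / (p - 1)) * p
          = -(((n:ℝ) - p - p * a) * p / (p - 1)) := by ring
      rw [e6]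
      linarith
    · intro x hx
      have hr0 : (0:ℝ) < ‖x‖ := norm_pos_iff.2 hx
      have hu0 : (0:ℝ) < 1 + B * ‖x‖ ^ α := by positivity
      have d1 : HasDerivAt (fun y : ℝ => y ^ α) (α * ‖x‖ ^ (α - 1)) ‖x‖ :=
        Real.hasDerivAt_rpow_const (Or.inl (ne_of_gt hr0))
      have d2 : HasDerivAt (fun y : ℝ => 1 + B * y ^ α) (B * (α * ‖x‖ ^ (α - 1))) ‖x‖ :=
        (d1.const_mul B).const_add 1
      have d4 : HasDerivAt (fun y : ℝ => (1 + B * y ^ α) ^ β)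
          (B * (α * ‖x‖ ^ (α - 1)) * β * (1 + B * ‖x‖ ^ α) ^ (β - 1)) ‖x‖ :=
        d2.rpow_const (Or.inl (ne_of_gt hu0))
      have d5 : HasDerivAt (fun y : ℝ => A * (1 + B * y ^ α) ^ β)
          (A * (B * (α * ‖x‖ ^ (α - 1)) * β * (1 + B * ‖x‖ ^ α) ^ (β - 1))) ‖x‖ :=
        d4.const_mul A
      have dn : DifferentiableAt ℝ (fun y : EuclideanSpace ℝ (Fin n) => ‖y‖) x :=
        differentiableAt_id.norm ℝ hx
      have dfn := dn.hasFDerivAt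
      have hvd : HasFDerivAt (fun y : EuclideanSpace ℝ (Fin n) => A * (1 + B * ‖y‖ ^ α) ^ β)
          ((A * (B * (α * ‖x‖ ^ (α - 1)) * β * (1 + B * ‖x‖ ^ α) ^ (β - 1))) •
            fderiv ℝ (fun y : EuclideanSpace ℝ (Fin n) => ‖y‖) x) x :=
        d5.comp_hasFDerivAt (f := fun y : EuclideanSpace ℝ (Fin n) => ‖y‖) x dfn
      have hN : ‖fderiv ℝ (fun y : EuclideanSpace ℝ (Fin n) => ‖y‖) x‖ ≤ 1 := by
        have := dfn.le_of_lipschitz lipschitzWith_one_norm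
        simpa using this
      set g' := A * (B * (α * ‖x‖ ^ (α - 1)) * β * (1 + B * ‖x‖ ^ α) ^ (β - 1)) with hg'def
      have hfd : ‖fderiv ℝ (fun y : EuclideanSpace ℝ (Fin n) =>
          A * (1 + B * ‖y‖ ^ α) ^ β) x‖ ≤ |g'| := by
        rw [hvd.fderiv, norm_smul, Real.norm_eq_abs]
        calc |g'| * ‖fderiv ℝ (fun y : EuclideanSpace ℝ (Fin n) => ‖y‖) x‖
            ≤ |g'| * 1 := mul_le_mul_of_nonneg_left hN (abs_nonneg _)
          _ = |g'| := mul_one _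
      have habs : |g'| = (|A| * |β| * B * α) *
          ((1 + B * ‖x‖ ^ α) ^ (β - 1) * ‖x‖ ^ (α - 1)) := by
        rw [hg'def]
        simp only [abs_mul]
        rw [abs_of_pos (Real.rpow_pos_of_pos hu0 (β - 1)), abs_of_pos hB, abs_of_pos hα0,
          abs_of_pos (Real.rpow_pos_of_pos hr0 (α - 1))]
        ring
      calc ‖x‖ ^ (-(p * a)) * ‖fderiv ℝ (fun y : EuclideanSpace ℝ (Fin n) =>
            A * (1 + B * ‖y‖ ^ α) ^ β) x‖ ^ p
          ≤ ‖x‖ ^ (-(p * a)) * |g'| ^ p :=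
            mul_le_mul_of_nonneg_left (Real.rpow_le_rpow (norm_nonneg _) hfd hp0.le)
              (Real.rpow_nonneg (norm_nonneg x) _)
        _ = (|A| * |β| * B * α) ^ p *
            (‖x‖ ^ (-(p * a) + (α - 1) * p) * (1 + B * ‖x‖ ^ α) ^ ((β - 1) * p)) := by
            rw [habs, Real.mul_rpow (by positivity) (by positivity),
              Real.mul_rpow (Real.rpow_nonneg hu0.le _) (Real.rpow_nonneg (norm_nonneg x) _),
              ← Real.rpow_mul hu0.le, ← Real.rpow_mul (norm_nonneg x),
              Real.rpow_add hr0]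
            ring
  · -- the q integral
    refine aux_template (C := |A| ^ q) (s := -(q * b)) (B := B) (α := α) (z := β * q)
      hn1 (by positivity) hB hα0 ?_ ?_ ?_ ?_
    · nlinarith
    · have h6 : q * b * ((n:ℝ) - p * γ) = (n:ℝ) * p * b := by
        calc q * b * ((n:ℝ) - p * γ) = q * ((n:ℝ) - p * γ) * b := by ring
          _ = (n:ℝ) * p * b := by rw [hqd]
      have h7 : (n:ℝ) * p * b < (n:ℝ) * ((n:ℝ) - p * γ) := by
        nlinarith [mul_pos hn0 hD]
      have h8 : q * b < n := by
        have h9 : q * b * ((n:ℝ) - p * γ) < (n:ℝ) * ((n:ℝ) - p * γ) := by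
          rw [h6]; exact h7
        exact (mul_lt_mul_iff_of_pos_right hnpγ).mp h9
      linarith
    · have e4 : -(q * b) + α * (β * q) = -(q * b) + (α * β) * q := by ring
      rw [e4, hαβ]
      have G' : (n:ℝ) * (p - 1) < q * (b * (p - 1) + ((n:ℝ) - p - p * a)) := by
        have h3 : q * (b * (p - 1) + ((n:ℝ) - p - p * a)) * ((n:ℝ) - p * γ)
            = (n:ℝ) * p * (b * (p - 1) + ((n:ℝ) - p - p * a)) := by
          calc q * (b * (p - 1) + ((n:ℝ) - p - p * a)) * ((n:ℝ) - p * γ)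
              = q * ((n:ℝ) - p * γ) * (b * (p - 1) + ((n:ℝ) - p - p * a)) := by ring
            _ = (n:ℝ) * p * (b * (p - 1) + ((n:ℝ) - p - p * a)) := by rw [hqd]
        have h5n2 : (n:ℝ) * (p - 1) * (p * γ) = (n:ℝ) * (p - 1) * (p + p * a - p * b) := by
          rw [h5]
        have h4 : (n:ℝ) * (p - 1) * ((n:ℝ) - p * γ)
            < (n:ℝ) * p * (b * (p - 1) + ((n:ℝ) - p - p * a)) := by
          nlinarith [mul_pos hn0 hD, h5n2]
        have h4' : (n:ℝ) * (p - 1) * ((n:ℝ) - p * γ)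
            < q * (b * (p - 1) + ((n:ℝ) - p - p * a)) * ((n:ℝ) - p * γ) := by
          rw [h3]; exact h4
        exact (mul_lt_mul_iff_of_pos_right hnpγ).mp h4'
      have e8 : -(q * b) + -(((n:ℝ) - p - p * a) / (p - 1)) * q
          = (-(q * b) * (p - 1) - ((n:ℝ) - p - p * a) * q) / (p - 1) := by
        field_simp
        ring
      rw [e8, div_lt_iff₀ hp1']
      nlinarith [G']
    · intro x hx
      have hu0 : (0:ℝ) < 1 + B * ‖x‖ ^ α := by positivity
      have habs : |A * (1 + B * ‖x‖ ^ α) ^ β| = |A| * (1 + B * ‖x‖ ^ α) ^ β := by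
        rw [abs_mul, abs_of_pos (Real.rpow_pos_of_pos hu0 β)]
      rw [habs, Real.mul_rpow (abs_nonneg A) (Real.rpow_nonneg hu0.le β),
        ← Real.rpow_mul hu0.le]
      exact le_of_eq (by ring)
end
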